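/- arXiv:2311.05751 — 3 statements merged into one kernel-verified Lean document; each statement's English description precedes it below -/
import Mathlib

section
/- For every non-atomic Radon measure μ on βω there is a full tree 𝒯 of subsets of ω such that for every U ⊆ ω, if T_U is Lebesgue-null in 2^ω then μ([U]) = 0, where [U] is the clopen subset of βω determined by U. Consequently, every ultrafilter on ω that 𝒩-diagonalizes full trees is a μ-point of βω: it avoids all non-atomic Radon measures on βω. -/
open MeasureTheory Topology ENNReal NNReal

/-- A *Radon measure* on a topological space: a σ-additive Borel probability measure which is
inner regular with respect to compact sets and outer regular with respect to open sets. -/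
def IsRadon {X : Type*} [TopologicalSpace X] [MeasurableSpace X] (μ : Measure X) : Prop :=
  IsProbabilityMeasure μ ∧ μ.InnerRegularWRT IsCompact MeasurableSet ∧ μ.OuterRegular

/-- A point `x` *avoids measures* if for every Radon measure `μ` with `μ {x} = 0` there is an
open neighbourhood of `x` of measure zero. -/
def AvoidsMeasures {X : Type*} [TopologicalSpace X] [MeasurableSpace X] (x : X) : Prop :=
  ∀ μ : Measure X, IsRadon μ → μ {x} = 0 → ∃ U : Set X, IsOpen U ∧ x ∈ U ∧ μ U = 0

/-- A point `x` is a *μ-point* if it avoids all non-atomic Radon measures. -/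
def IsMuPoint {X : Type*} [TopologicalSpace X] [MeasurableSpace X] (x : X) : Prop :=
  ∀ μ : Measure X, IsRadon μ → (∀ y : X, μ {y} = 0) →
    ∃ U : Set X, IsOpen U ∧ x ∈ U ∧ μ U = 0

/-- A point `p` is a *weak P-point* if it is not in the closure of any countable subset of
`X \ {p}`. -/
def IsWeakPPoint {X : Type*} [TopologicalSpace X] (p : X) : Prop :=
  ∀ C : Set X, C.Countable → p ∉ C → p ∉ closure C

/-- The basic clopen cylinder `[v] ⊆ 2^ω` determined by a finite 0-1 sequence `v`. -/
def Cyl (v : List Bool) : Set (ℕ → Bool) := {x | ∀ i : Fin v.length, x i.val = v.get i}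

/-- `T` is a *tree of subsets of `ω`*: a family indexed by finite 0-1 sequences such that
`T t ⊆* T s` whenever `t` end-extends `s`, and each level `{T s : s ∈ 2^k}` consists of
pairwise almost disjoint sets whose union is almost all of `ω`. -/
def IsTreeOfSubsets (T : List Bool → Set ℕ) : Prop :=
  (∀ s t : List Bool, s <+: t → (T t \ T s).Finite) ∧
  (∀ k : ℕ, ((⋃ s ∈ {l : List Bool | l.length = k}, T s)ᶜ : Set ℕ).Finite) ∧
  (∀ s t : List Bool, s.length = t.length → s ≠ t → (T s ∩ T t).Finite)

/-- A tree of subsets of `ω` is *full* if all its members are infinite. -/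
def IsFullTree (T : List Bool → Set ℕ) : Prop := ∀ s : List Bool, (T s).Infinite

/-- For a tree `T` of subsets of `ω` and `X ⊆ ω`, the set
`T_X = {x ∈ 2^ω : T (x↾k) ∩ X is infinite for all k}`. -/
def TreeLimit (T : List Bool → Set ℕ) (X : Set ℕ) : Set (ℕ → Bool) :=
  {x | ∀ k : ℕ, (T (List.ofFn fun i : Fin k => x i.val) ∩ X).Infinite}

/-- `βω`, the Stone–Čech compactification of the discrete space `ω`, identified with the Stone
space of all ultrafilters on `ℕ`, equipped with its Borel σ-algebra. -/
instance : MeasurableSpace (Ultrafilter ℕ) := borel (Ultrafilter ℕ)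
instance : BorelSpace (Ultrafilter ℕ) := ⟨rfl⟩

namespace MuAux
open Set

def K (A : Set ℕ) : Set (Ultrafilter ℕ) := {x | A ∈ x}
lemma isOpen_K (A : Set ℕ) : IsOpen (K A) := ultrafilter_isOpen_basic A
lemma measurableSet_K (A : Set ℕ) : MeasurableSet (K A) := (isOpen_K A).measurableSet
lemma K_mono {A B : Set ℕ} (h : A ⊆ B) : K A ⊆ K B := fun _ hx => Filter.mem_of_superset hx h
lemma K_empty : K (∅ : Set ℕ) = ∅ := by
  ext y
  simp only [K, mem_setOf_eq, mem_empty_iff_false, iff_false]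
  exact fun hy => y.neBot.ne (Filter.empty_mem_iff_bot.mp hy)
lemma K_union (A B : Set ℕ) : K (A ∪ B) = K A ∪ K B := by
  ext x; exact Ultrafilter.union_mem_iff
lemma K_disjoint {A B : Set ℕ} (h : A ∩ B = ∅) : Disjoint (K A) (K B) := by
  rw [Set.disjoint_left]
  intro x hA hB
  have : A ∩ B ∈ x := Filter.inter_mem hA hB
  rw [h] at this
  exact x.neBot.ne (Filter.empty_mem_iff_bot.mp this)
lemma K_diff_union {A B : Set ℕ} (h : B ⊆ A) : K A = K B ∪ K (A \ B) := by
  ext x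
  constructor
  · intro hA
    rcases x.mem_or_compl_mem B with hB | hB
    · exact Or.inl hB
    · exact Or.inr (show A \ B ∈ x by rw [Set.diff_eq]; exact Filter.inter_mem hA hB)
  · rintro (hB | hB)
    · exact Filter.mem_of_superset hB h
    · exact Filter.mem_of_superset hB diff_subset

variable (μ : Measure (Ultrafilter ℕ))

lemma measure_pure_range (hna : ∀ y : Ultrafilter ℕ, μ {y} = 0) :
    μ (Set.range (pure : ℕ → Ultrafilter ℕ)) = 0 := by
  rw [← Set.iUnion_singleton_eq_range]
  exact measure_iUnion_null fun n => hna _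

lemma nu_add {A B : Set ℕ} (h : B ⊆ A) : μ (K A) = μ (K B) + μ (K (A \ B)) := by
  rw [K_diff_union h]
  exact measure_union (K_disjoint (Set.inter_diff_self _ _)) (measurableSet_K _)

lemma cover_small (hO : μ.OuterRegular) (hna : ∀ y : Ultrafilter ℕ, μ {y} = 0)
    (A : Set ℕ) {ε : ℝ≥0∞} (hε : 0 < ε) (x : Ultrafilter ℕ) (hx : x ∈ K A) :
    ∃ B : Set ℕ, B ⊆ A ∧ x ∈ K B ∧ μ (K B) < ε := by
  haveI := hO
  obtain ⟨V, hV1, hVo, hVε⟩ := Set.exists_isOpen_lt_of_lt {x} ε ((hna x).trans_lt hε)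
  obtain ⟨t, ht, hxt, htV⟩ := ultrafilterBasis_is_basis.exists_subset_of_mem_open
    (hV1 rfl) hVo
  obtain ⟨B, rfl⟩ := ht
  refine ⟨B ∩ A, Set.inter_subset_right, Filter.inter_mem hxt hx, ?_⟩
  exact lt_of_le_of_lt (measure_mono (fun y hy => htV (Filter.mem_of_superset hy
    Set.inter_subset_left))) hVε

lemma fine_cover (hO : μ.OuterRegular) (hna : ∀ y : Ultrafilter ℕ, μ {y} = 0)
    (A : Set ℕ) {ε : ℝ≥0∞} (hε : 0 < ε) :
    ∃ (n : ℕ) (B : ℕ → Set ℕ), (∀ i, B i ⊆ A ∧ μ (K (B i)) < ε) ∧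
      A ⊆ ⋃ i ∈ Finset.range n, B i := by
  classical
  choose B0 hB1 hB2 hB3 using cover_small μ hO hna A hε
  set Bt : Ultrafilter ℕ → Set ℕ := fun x => if h : x ∈ K A then B0 x h else ∅ with hBt
  have hBt1 : ∀ x, Bt x ⊆ A := by
    intro x; by_cases h : x ∈ K A
    · simp only [hBt, dif_pos h]; exact hB1 x h
    · simp only [hBt, dif_neg h]; exact empty_subset _
  have hBt3 : ∀ x, μ (K (Bt x)) < ε := by
    intro x; by_cases h : x ∈ K A
    · simp only [hBt, dif_pos h]; exact hB3 x h
    · simp only [hBt, dif_neg h]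
      rw [K_empty, measure_empty]
      exact hε
  have hcpt : IsCompact (K A) := (ultrafilter_isClosed_basic A).isCompact
  obtain ⟨t, ht1, ht2⟩ := hcpt.elim_nhds_subcover (fun x => K (Bt x))
    (fun x hx => (isOpen_K _).mem_nhds (by simp only [hBt, dif_pos hx]; exact hB2 x hx))
  set xs := t.toList with hxs
  refine ⟨xs.length, fun i => Bt (xs.getD i (pure 0)), fun i => ⟨hBt1 _, hBt3 _⟩,
    fun a ha => ?_⟩
  have : (pure a : Ultrafilter ℕ) ∈ K A := ha
  obtain ⟨x, hxt, hx⟩ := Set.mem_iUnion₂.mp (ht2 this)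
  obtain ⟨i, hi, rfl⟩ := List.mem_iff_getElem.mp (Finset.mem_toList.mpr hxt)
  refine Set.mem_biUnion (Finset.mem_range.mpr hi) ?_
  rw [List.getD_eq_getElem _ _ hi]
  exact hx

lemma split_half (hP : IsProbabilityMeasure μ) (hO : μ.OuterRegular)
    (hna : ∀ y : Ultrafilter ℕ, μ {y} = 0) (A : Set ℕ) {ε : ℝ≥0∞} (hε : 0 < ε) :
    ∃ B ⊆ A, μ (K B) ≤ μ (K A) / 2 ∧ μ (K (A \ B)) ≤ μ (K A) / 2 + ε := by
  classical
  obtain ⟨n, B, hB, hcov⟩ := fine_cover μ hO hna A hε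
  set C : ℕ → Set ℕ := fun i => (B i ∩ A) \ ⋃ j ∈ Finset.range i, B j with hC
  set g : ℕ → Set ℕ := fun j => ⋃ i ∈ Finset.range j, C i with hg
  have hgsub : ∀ j, g j ⊆ A := by
    intro j a ha
    simp only [hg, mem_iUnion] at ha
    obtain ⟨i, -, hi⟩ := ha
    exact hi.1.2
  have hgA : A ⊆ g n := by
    intro a ha
    have : ∃ i, i < n ∧ a ∈ B i := by
      obtain ⟨i, hi, hBi⟩ := Set.mem_iUnion₂.mp (hcov ha)
      exact ⟨i, Finset.mem_range.mp hi, hBi⟩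
    obtain ⟨i, hin, hBi⟩ := this
    have hex : ∃ i, a ∈ B i := ⟨i, hBi⟩
    set i0 := Nat.find hex with hi0
    have hi0n : i0 < n := lt_of_le_of_lt (Nat.find_le hBi) hin
    refine Set.mem_biUnion (Finset.mem_range.mpr hi0n) ?_
    refine ⟨⟨Nat.find_spec hex, ha⟩, ?_⟩
    simp only [mem_iUnion, Finset.mem_range, not_exists]
    intro j hj hBj
    exact Nat.find_min hex hj hBj
  have hstep : ∀ j, μ (K (g (j + 1))) ≤ μ (K (g j)) + ε := by
    intro j
    have : g (j + 1) = g j ∪ C j := by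
      simp only [hg, Finset.range_add_one]
      rw [Finset.set_biUnion_insert]
      exact Set.union_comm _ _
    rw [this, K_union]
    refine le_trans (measure_union_le _ _) ?_
    gcongr
    exact le_of_lt (lt_of_le_of_lt (measure_mono (K_mono (fun a ha => ha.1.1))) (hB j).2)
  set P : ℕ → Prop := fun j => μ (K (g j)) ≤ μ (K A) / 2 with hPdef
  have hP0 : P 0 := by
    simp only [hPdef, hg, Finset.range_zero]
    simp [K_empty]
  set j0 := Nat.findGreatest P n with hj0
  have hPj0 : P j0 := Nat.findGreatest_spec (Nat.zero_le n) hP0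
  have hj0n : j0 ≤ n := Nat.findGreatest_le n
  refine ⟨g j0, hgsub j0, hPj0, ?_⟩
  rcases eq_or_lt_of_le hj0n with heq | hlt
  · have : A \ g j0 = ∅ := by
      rw [heq]
      exact Set.diff_eq_empty.mpr hgA
    rw [this, K_empty]
    simp
  · have hnP : ¬ P (j0 + 1) := Nat.findGreatest_is_greatest (Nat.lt_succ_self j0) hlt
    have h1 : μ (K A) / 2 < μ (K (g (j0 + 1))) := not_le.mp hnP
    have h2 : μ (K A) / 2 ≤ μ (K (g j0)) + ε := le_trans h1.le (hstep j0)
    have hfin : μ (K (g j0)) ≠ ∞ := measure_ne_top μ _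
    have hadd := nu_add μ (hgsub j0)
    have : μ (K (g j0)) + μ (K (A \ g j0)) ≤ μ (K (g j0)) + (μ (K A) / 2 + ε) := by
      calc μ (K (g j0)) + μ (K (A \ g j0)) = μ (K A) := hadd.symm
        _ = μ (K A) / 2 + μ (K A) / 2 := (ENNReal.add_halves _).symm
        _ ≤ (μ (K (g j0)) + ε) + μ (K A) / 2 := by gcongr
        _ = μ (K (g j0)) + (μ (K A) / 2 + ε) := by ring
    exact (ENNReal.add_le_add_iff_left hfin).mp this

lemma small_infinite (hO : μ.OuterRegular) (hna : ∀ y : Ultrafilter ℕ, μ {y} = 0)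
    {A : Set ℕ} (hA : A.Infinite) {ε : ℝ≥0∞} (hε : 0 < ε) :
    ∃ E ⊆ A, E.Infinite ∧ μ (K E) < ε := by
  obtain ⟨n, B, hB, hcov⟩ := fine_cover μ hO hna A hε
  have : ∃ i ∈ Finset.range n, ((B i) ∩ A).Infinite := by
    by_contra h
    push_neg at h
    have : A ⊆ ⋃ i ∈ Finset.range n, (B i ∩ A) := by
      intro a ha
      obtain ⟨i, hi, hBi⟩ := Set.mem_iUnion₂.mp (hcov ha)
      exact Set.mem_biUnion hi ⟨hBi, ha⟩
    exact hA ((Set.Finite.biUnion (Finset.finite_toSet _) h).subset this)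
  obtain ⟨i, -, hi⟩ := this
  exact ⟨B i ∩ A, Set.inter_subset_right, hi,
    lt_of_le_of_lt (measure_mono (K_mono Set.inter_subset_left)) (hB i).2⟩

lemma split_infinite {E : Set ℕ} (hE : E.Infinite) :
    ∃ D ⊆ E, D.Infinite ∧ (E \ D).Infinite := by
  set e := hE.natEmbedding with he
  refine ⟨Set.range (fun k => (e (2 * k) : ℕ)), ?_, ?_, ?_⟩
  · rintro x ⟨k, rfl⟩; exact (e (2 * k)).2
  · apply Set.infinite_range_of_injective
    intro a b hab
    have := e.injective (Subtype.ext hab)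
    omega
  · apply Set.Infinite.mono (s := Set.range (fun k => (e (2 * k + 1) : ℕ)))
    swap
    · apply Set.infinite_range_of_injective
      intro a b hab
      have := e.injective (Subtype.ext hab)
      omega
    · rintro x ⟨k, rfl⟩
      refine ⟨(e (2 * k + 1)).2, ?_⟩
      rintro ⟨j, hj⟩
      have := e.injective (Subtype.ext hj)
      omega

lemma main_split (hP : IsProbabilityMeasure μ) (hO : μ.OuterRegular)
    (hna : ∀ y : Ultrafilter ℕ, μ {y} = 0) {A : Set ℕ} (hA : A.Infinite)
    {ε : ℝ≥0∞} (hε : 0 < ε) :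
    ∃ B ⊆ A, B.Infinite ∧ (A \ B).Infinite ∧
      μ (K B) ≤ μ (K A) / 2 + 2 * ε ∧ μ (K (A \ B)) ≤ μ (K A) / 2 + 2 * ε := by
  obtain ⟨B0, hB0A, hB0, hAB0⟩ := split_half μ hP hO hna A hε
  by_cases h1 : B0.Infinite
  · by_cases h2 : (A \ B0).Infinite
    · refine ⟨B0, hB0A, h1, h2, le_trans hB0 le_self_add, le_trans hAB0 ?_⟩
      gcongr
      rw [two_mul]
      exact le_self_add
    · obtain ⟨E, hEB, hEinf, hEν⟩ := small_infinite μ hO hna h1 hε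
      obtain ⟨D, hDE, hDinf, hEDinf⟩ := split_infinite hEinf
      refine ⟨B0 \ D, fun a ha => hB0A ha.1, ?_, ?_, ?_, ?_⟩
      · exact hEDinf.mono (fun a ha => ⟨hEB ha.1, fun h => ha.2 h⟩)
      · have : A \ (B0 \ D) = (A \ B0) ∪ (D ∩ A) := by
          ext a
          simp only [mem_diff, mem_union, mem_inter_iff]
          constructor
          · rintro ⟨ha, h⟩
            by_cases hb : a ∈ B0
            · exact Or.inr ⟨by_contra fun hd => h ⟨hb, hd⟩, ha⟩
            · exact Or.inl ⟨ha, hb⟩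
          · rintro (⟨ha, hb⟩ | ⟨hd, ha⟩)
            · exact ⟨ha, fun h => hb h.1⟩
            · exact ⟨ha, fun h => h.2 hd⟩
        rw [this]
        refine Set.Infinite.mono (fun a (ha : a ∈ D ∩ A) => Or.inr ha) ?_
        have hDA : D ⊆ A := fun a ha => hB0A (hEB (hDE ha))
        rw [Set.inter_eq_self_of_subset_left hDA]
        exact hDinf
      · exact le_trans (measure_mono (K_mono diff_subset)) (le_trans hB0 le_self_add)
      · have hsub : A \ (B0 \ D) ⊆ (A \ B0) ∪ D := by
          rintro a ⟨ha, h⟩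
          by_cases hb : a ∈ B0
          · exact Or.inr (by_contra fun hd => h ⟨hb, hd⟩)
          · exact Or.inl ⟨ha, hb⟩
        calc μ (K (A \ (B0 \ D))) ≤ μ (K ((A \ B0) ∪ D)) := measure_mono (K_mono hsub)
          _ ≤ μ (K (A \ B0)) + μ (K D) := by rw [K_union]; exact measure_union_le _ _
          _ ≤ (μ (K A) / 2 + ε) + ε := by
              gcongr
              exact le_of_lt (lt_of_le_of_lt (measure_mono (K_mono hDE)) hEν)
          _ = μ (K A) / 2 + 2 * ε := by ring
  · have h2 : (A \ B0).Infinite := hA.diff (Set.not_infinite.mp h1)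
    obtain ⟨E, hEB, hEinf, hEν⟩ := small_infinite μ hO hna h2 hε
    obtain ⟨D, hDE, hDinf, hEDinf⟩ := split_infinite hEinf
    have hDA : D ⊆ A \ B0 := fun a ha => hEB (hDE ha)
    refine ⟨B0 ∪ D, ?_, ?_, ?_, ?_, ?_⟩
    · rintro a (h | h)
      · exact hB0A h
      · exact (hDA h).1
    · exact Set.Infinite.mono Set.subset_union_right hDinf
    · refine Set.Infinite.mono (t := A \ (B0 ∪ D)) ?_ hEDinf
      rintro a ⟨haE, haD⟩
      refine ⟨(hEB haE).1, ?_⟩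
      rintro (h | h)
      · exact (hEB haE).2 h
      · exact haD h
    · calc μ (K (B0 ∪ D)) ≤ μ (K B0) + μ (K D) := by rw [K_union]; exact measure_union_le _ _
        _ ≤ μ (K A) / 2 + ε := by
            gcongr
            exact le_of_lt (lt_of_le_of_lt (measure_mono (K_mono hDE)) hEν)
        _ ≤ μ (K A) / 2 + 2 * ε := by gcongr; rw [two_mul]; exact le_self_add
    · refine le_trans (measure_mono (K_mono (fun a ha => ?_))) (le_trans hAB0 ?_)
      · exact ⟨ha.1, fun h => ha.2 (Or.inl h)⟩
      · gcongr
        rw [two_mul]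
        exact le_self_add

/-! ### The tree construction -/

noncomputable def eps (k : ℕ) : ℝ≥0∞ := (1 / 2 : ℝ≥0∞) ^ (2 * k + 3)

lemma eps_pos (k : ℕ) : 0 < eps k := by
  apply ENNReal.pow_pos
  simp

lemma half_mul_two : (1 / 2 : ℝ≥0∞) * 2 = 1 := by
  rw [one_div, ENNReal.inv_mul_cancel] <;> simp

lemma two_eps (k : ℕ) : 2 * eps k = (1 / 2 : ℝ≥0∞) ^ (2 * k + 2) := by
  rw [eps, pow_succ, ← mul_assoc, mul_comm (2 : ℝ≥0∞), mul_assoc,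
    mul_comm (2 : ℝ≥0∞) (1 / 2), half_mul_two, mul_one]

lemma half_add_half (n : ℕ) :
    (1 / 2 : ℝ≥0∞) ^ (n + 1) + (1 / 2 : ℝ≥0∞) ^ (n + 1) = (1 / 2 : ℝ≥0∞) ^ n := by
  rw [← two_mul, pow_succ, mul_comm (2 : ℝ≥0∞), mul_assoc, half_mul_two, mul_one]

variable (hP : IsProbabilityMeasure μ) (hO : μ.OuterRegular)
  (hna : ∀ y : Ultrafilter ℕ, μ {y} = 0)

open Classical in
noncomputable def child (A : Set ℕ) (k : ℕ) (b : Bool) : Set ℕ :=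
  if hA : A.Infinite then
    (if b then A \ Classical.choose (main_split μ hP hO hna hA (eps_pos k))
     else Classical.choose (main_split μ hP hO hna hA (eps_pos k)))
  else A

lemma child_subset (A : Set ℕ) (k : ℕ) (b : Bool) : child μ hP hO hna A k b ⊆ A := by
  unfold child
  split_ifs with hA hb
  · exact diff_subset
  · exact (Classical.choose_spec (main_split μ hP hO hna hA (eps_pos k))).1
  · exact subset_rfl

lemma child_infinite {A : Set ℕ} (hA : A.Infinite) (k : ℕ) (b : Bool) :
    (child μ hP hO hna A k b).Infinite := by
  rw [child, dif_pos hA]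
  obtain ⟨-, h1, h2, -, -⟩ := Classical.choose_spec (main_split μ hP hO hna hA (eps_pos k))
  cases b
  · simpa using h1
  · simpa using h2

lemma child_union {A : Set ℕ} (hA : A.Infinite) (k : ℕ) :
    child μ hP hO hna A k false ∪ child μ hP hO hna A k true = A := by
  rw [child, child, dif_pos hA, dif_pos hA]
  simp only [if_true, if_false, Bool.false_eq_true, ite_false, ite_true]
  exact Set.union_diff_cancel
    (Classical.choose_spec (main_split μ hP hO hna hA (eps_pos k))).1

lemma child_disjoint {A : Set ℕ} (hA : A.Infinite) (k : ℕ) :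
    child μ hP hO hna A k false ∩ child μ hP hO hna A k true = ∅ := by
  rw [child, child, dif_pos hA, dif_pos hA]
  simp only [if_true, if_false, Bool.false_eq_true, ite_false, ite_true]
  exact Set.inter_diff_self _ _

lemma child_measure {A : Set ℕ} (hA : A.Infinite) (k : ℕ) (b : Bool) :
    μ (K (child μ hP hO hna A k b)) ≤ μ (K A) / 2 + (1 / 2 : ℝ≥0∞) ^ (2 * k + 2) := by
  rw [← two_eps, child, dif_pos hA]
  obtain ⟨-, -, -, h1, h2⟩ := Classical.choose_spec (main_split μ hP hO hna hA (eps_pos k))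
  cases b
  · simpa using h1
  · simpa using h2

noncomputable def g : List Bool → Set ℕ
  | [] => Set.univ
  | b :: l => child μ hP hO hna (g l) l.length b

lemma g_infinite (l : List Bool) : (g μ hP hO hna l).Infinite := by
  induction l with
  | nil => exact Set.infinite_univ
  | cons b l ih => exact child_infinite μ hP hO hna ih _ _

lemma g_cons_subset (b : Bool) (l : List Bool) :
    g μ hP hO hna (b :: l) ⊆ g μ hP hO hna l :=
  child_subset μ hP hO hna _ _ _

lemma g_suffix {l1 l2 : List Bool} (h : l1 <:+ l2) :
    g μ hP hO hna l2 ⊆ g μ hP hO hna l1 := by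
  obtain ⟨u, rfl⟩ := h
  induction u with
  | nil => exact subset_rfl
  | cons b u ih => exact subset_trans (g_cons_subset μ hP hO hna b _) ih

lemma g_level_cover (k : ℕ) (m : ℕ) : ∃ l : List Bool, l.length = k ∧ m ∈ g μ hP hO hna l := by
  induction k with
  | zero => exact ⟨[], rfl, trivial⟩
  | succ k ih =>
    obtain ⟨l, hl, hm⟩ := ih
    have := child_union μ hP hO hna (g_infinite μ hP hO hna l) l.length
    rw [← this] at hm
    rcases hm with hm | hm
    · exact ⟨false :: l, by simp [hl], hm⟩
    · exact ⟨true :: l, by simp [hl], hm⟩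

lemma g_level_disjoint : ∀ (l1 l2 : List Bool), l1.length = l2.length → l1 ≠ l2 →
    g μ hP hO hna l1 ∩ g μ hP hO hna l2 = ∅ := by
  intro l1
  induction l1 with
  | nil =>
    intro l2 hlen hne
    cases l2 with
    | nil => exact absurd rfl hne
    | cons b l => simp at hlen
  | cons b1 m1 ih =>
    intro l2 hlen hne
    cases l2 with
    | nil => simp at hlen
    | cons b2 m2 =>
      simp only [List.length_cons, Nat.succ.injEq] at hlen
      by_cases hm : m1 = m2
      · subst hm
        have hb : b1 ≠ b2 := fun h => hne (by rw [h])
        have hA := g_infinite μ hP hO hna m1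
        cases b1 <;> cases b2
        · exact absurd rfl hb
        · exact child_disjoint μ hP hO hna hA m1.length
        · rw [Set.inter_comm]
          exact child_disjoint μ hP hO hna hA m1.length
        · exact absurd rfl hb
      · have := ih m2 (by omega) hm
        apply Set.eq_empty_of_subset_empty
        rw [← this]
        exact Set.inter_subset_inter (g_cons_subset μ hP hO hna b1 m1)
          (g_cons_subset μ hP hO hna b2 m2)

lemma g_measure (l : List Bool) :
    μ (K (g μ hP hO hna l)) + (1 / 2 : ℝ≥0∞) ^ (2 * l.length) ≤
      2 * (1 / 2 : ℝ≥0∞) ^ l.length := by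
  induction l with
  | nil =>
    haveI := hP
    simp only [List.length_nil, mul_zero, pow_zero, mul_one, g]
    have : K (Set.univ : Set ℕ) = Set.univ := Set.eq_univ_of_forall fun _ => Filter.univ_mem
    rw [this, measure_univ]
    norm_num
  | cons b l ih =>
    have hstep := child_measure μ hP hO hna (g_infinite μ hP hO hna l) l.length b
    simp only [List.length_cons, g]
    have e1 : (2 : ℕ) * (l.length + 1) = 2 * l.length + 2 := by ring
    rw [e1]
    calc μ (K (child μ hP hO hna (g μ hP hO hna l) l.length b))
          + (1 / 2 : ℝ≥0∞) ^ (2 * l.length + 2)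
        ≤ (μ (K (g μ hP hO hna l)) / 2 + (1 / 2 : ℝ≥0∞) ^ (2 * l.length + 2))
          + (1 / 2 : ℝ≥0∞) ^ (2 * l.length + 2) := by
          exact add_le_add_left hstep _
      _ = μ (K (g μ hP hO hna l)) / 2 + (1 / 2 : ℝ≥0∞) ^ (2 * l.length + 1) := by
          rw [add_assoc, half_add_half]
      _ = (μ (K (g μ hP hO hna l)) + (1 / 2 : ℝ≥0∞) ^ (2 * l.length)) * 2⁻¹ := by
          rw [add_mul, pow_succ, one_div, div_eq_mul_inv]
      _ ≤ (2 * (1 / 2 : ℝ≥0∞) ^ l.length) * 2⁻¹ := mul_le_mul_left ih _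
      _ = 2 * (1 / 2 : ℝ≥0∞) ^ (l.length + 1) := by
          rw [pow_succ, one_div, mul_assoc]

noncomputable def Tr (s : List Bool) : Set ℕ := g μ hP hO hna s.reverse

lemma Tr_infinite (s : List Bool) : (Tr μ hP hO hna s).Infinite :=
  g_infinite μ hP hO hna s.reverse

lemma Tr_mono {s t : List Bool} (h : s <+: t) :
    Tr μ hP hO hna t ⊆ Tr μ hP hO hna s :=
  g_suffix μ hP hO hna (List.reverse_suffix.mpr h)

lemma Tr_level_cover (k : ℕ) (m : ℕ) :
    ∃ s : List Bool, s.length = k ∧ m ∈ Tr μ hP hO hna s := by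
  obtain ⟨l, hl, hm⟩ := g_level_cover μ hP hO hna k m
  exact ⟨l.reverse, by simp [hl], by simpa [Tr, List.reverse_reverse] using hm⟩

lemma Tr_level_disjoint {s t : List Bool} (hlen : s.length = t.length) (hne : s ≠ t) :
    Tr μ hP hO hna s ∩ Tr μ hP hO hna t = ∅ :=
  g_level_disjoint μ hP hO hna s.reverse t.reverse (by simp [hlen])
    (fun h => hne (List.reverse_injective h))

lemma Tr_measure (s : List Bool) :
    μ (K (Tr μ hP hO hna s)) ≤ 2 * (1 / 2 : ℝ≥0∞) ^ s.length := by
  have := g_measure μ hP hO hna s.reverse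
  rw [List.length_reverse] at this
  exact le_trans le_self_add this

lemma Tr_isTree : IsTreeOfSubsets (Tr μ hP hO hna) := by
  refine ⟨fun s t h => ?_, fun k => ?_, fun s t hlen hne => ?_⟩
  · rw [Set.diff_eq_empty.mpr (Tr_mono μ hP hO hna h)]
    exact Set.finite_empty
  · have : (⋃ s ∈ {l : List Bool | l.length = k}, Tr μ hP hO hna s) = Set.univ := by
      refine Set.eq_univ_of_forall fun m => ?_
      obtain ⟨s, hs, hm⟩ := Tr_level_cover μ hP hO hna k m
      exact Set.mem_biUnion hs hm
    rw [this, Set.compl_univ]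
    exact Set.finite_empty
  · rw [Tr_level_disjoint μ hP hO hna hlen hne]
    exact Set.finite_empty

lemma Tr_full : IsFullTree (Tr μ hP hO hna) := fun s => Tr_infinite μ hP hO hna s

/-! ### Cylinder lemmas -/

lemma cyl_nil : Cyl [] = Set.univ := by
  refine Set.eq_univ_of_forall fun x => ?_
  intro i
  exact absurd i.2 (by simp)

lemma measurableSet_cyl (v : List Bool) : MeasurableSet (Cyl v) := by
  have : Cyl v = ⋂ i : Fin v.length, {x : ℕ → Bool | x i.val = v.get i} := by
    ext x; simp [Cyl, Set.mem_iInter]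
  rw [this]
  refine MeasurableSet.iInter fun i => ?_
  have h2 : {x : ℕ → Bool | x i.val = v.get i} =
      (fun x : ℕ → Bool => x i.val) ⁻¹' {v.get i} := rfl
  rw [h2]
  exact (measurable_pi_apply i.val) (measurableSet_singleton (v.get i))

lemma mem_cyl_ofFn (x : ℕ → Bool) (k : ℕ) :
    x ∈ Cyl (List.ofFn fun i : Fin k => x i.val) := by
  intro i
  rw [List.get_ofFn]
  rfl

lemma eq_ofFn_of_mem_cyl {x : ℕ → Bool} {s : List Bool} (h : x ∈ Cyl s) :
    s = List.ofFn fun i : Fin s.length => x i.val := by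
  refine List.ext_get (by simp) fun n h1 h2 => ?_
  rw [List.get_ofFn]
  exact (h ⟨n, h1⟩).symm

lemma cyl_disjoint {s t : List Bool} (hlen : s.length = t.length) (hne : s ≠ t) :
    Disjoint (Cyl s) (Cyl t) := by
  rw [Set.disjoint_left]
  intro x hs ht
  apply hne
  refine List.ext_get hlen fun n h1 h2 => ?_
  rw [← hs ⟨n, h1⟩, ← ht ⟨n, h2⟩]

lemma ofFn_prefix (x : ℕ → Bool) (k : ℕ) :
    (List.ofFn fun i : Fin k => x i.val) <+: (List.ofFn fun i : Fin (k + 1) => x i.val) := by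
  refine ⟨[x k], ?_⟩
  rw [List.ofFn_succ' (fun i : Fin (k + 1) => x i.val)]
  rw [List.concat_eq_append]
  congr 1

/-! ### The main measure estimate -/

lemma main_measure (lam : Measure (ℕ → Bool))
    (hlam : ∀ v : List Bool, lam (Cyl v) = (1 / 2 : ℝ≥0∞) ^ v.length)
    (U : Set ℕ) (hU : lam (TreeLimit (Tr μ hP hO hna) U) = 0) :
    μ (K U) = 0 := by
  classical
  haveI : IsFiniteMeasure lam := ⟨by
    rw [← cyl_nil, hlam]
    norm_num⟩
  set Tt := Tr μ hP hO hna with hTt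
  set S : ℕ → Set (List Bool) := fun k => {s | s.length = k ∧ (Tt s ∩ U).Infinite} with hS
  have hSfin : ∀ k, (S k).Finite := fun k =>
    (List.finite_length_eq Bool k).subset (fun s hs => hs.1)
  set D : ℕ → Set (ℕ → Bool) := fun k => ⋃ s ∈ S k, Cyl s with hD
  have hDmeas : ∀ k, MeasurableSet (D k) := fun k =>
    Set.Finite.measurableSet_biUnion (hSfin k) (fun s _ => measurableSet_cyl s)
  have hmem : ∀ (x : ℕ → Bool) (k : ℕ), x ∈ D k →
      ((List.ofFn fun i : Fin k => x i.val) ∈ S k ∧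
        x ∈ Cyl (List.ofFn fun i : Fin k => x i.val)) := by
    intro x k hx
    obtain ⟨s, hsS, hxs⟩ := Set.mem_iUnion₂.mp hx
    have hsk : s.length = k := hsS.1
    have : s = List.ofFn fun i : Fin k => x i.val := by
      subst hsk
      exact eq_ofFn_of_mem_cyl hxs
    rw [← this]
    exact ⟨hsS, hxs⟩
  have hDanti : Antitone D := by
    refine antitone_nat_of_succ_le fun k => ?_
    intro x hx
    obtain ⟨hsS, -⟩ := hmem x (k + 1) hx
    have hinf : (Tt (List.ofFn fun i : Fin k => x i.val) ∩ U).Infinite := by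
      refine Set.Infinite.mono ?_ hsS.2
      exact Set.inter_subset_inter_left _ (Tr_mono μ hP hO hna (ofFn_prefix x k))
    refine Set.mem_biUnion (show _ ∈ S k from ⟨by simp, hinf⟩) (mem_cyl_ofFn x k)
  have hInter : (⋂ k, D k) ⊆ TreeLimit Tt U := by
    intro x hx k
    exact (hmem x k (Set.mem_iInter.mp hx k)).1.2
  have hlim : Filter.Tendsto (fun k => lam (D k)) Filter.atTop (𝓝 (lam (⋂ k, D k))) :=
    tendsto_measure_iInter_atTop (fun k => (hDmeas k).nullMeasurableSet) hDanti
      ⟨0, measure_ne_top lam _⟩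
  have h0 : lam (⋂ k, D k) = 0 :=
    le_antisymm (le_trans (measure_mono hInter) (le_of_eq hU)) zero_le
  rw [h0] at hlim
  have hDval : ∀ k, lam (D k) = (hSfin k).toFinset.card * (1 / 2 : ℝ≥0∞) ^ k := by
    intro k
    have hDk : D k = ⋃ s ∈ (hSfin k).toFinset, Cyl s := by
      ext x
      simp [hD, Set.Finite.mem_toFinset]
    rw [hDk, measure_biUnion_finset ?_ (fun s _ => measurableSet_cyl s)]
    · rw [Finset.sum_congr rfl (fun s hs => ?_)]
      · rw [Finset.sum_const, nsmul_eq_mul]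
      · rw [hlam s, ((hSfin k).mem_toFinset.mp hs).1]
    · intro s hs t ht hne
      exact cyl_disjoint (by rw [((hSfin k).mem_toFinset.mp hs).1,
          ((hSfin k).mem_toFinset.mp ht).1]) hne
  have hcov : ∀ k, K U ⊆ Set.range (pure : ℕ → Ultrafilter ℕ) ∪
      ⋃ s ∈ (hSfin k).toFinset, K (Tt s) := by
    intro k x hx
    by_cases hp : x ∈ Set.range (pure : ℕ → Ultrafilter ℕ)
    · exact Or.inl hp
    · refine Or.inr ?_
      have hxinf : ∀ A ∈ x, (A : Set ℕ).Infinite := by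
        intro A hAx
        by_contra hfin
        obtain ⟨a, -, ha⟩ := Ultrafilter.eq_pure_of_finite_mem (Set.not_infinite.mp hfin) hAx
        exact hp ⟨a, ha.symm⟩
      have huniv : (⋃ s ∈ {l : List Bool | l.length = k}, Tt s) ∈ x := by
        have : (⋃ s ∈ {l : List Bool | l.length = k}, Tt s) = Set.univ := by
          refine Set.eq_univ_of_forall fun m => ?_
          obtain ⟨s, hs, hm⟩ := Tr_level_cover μ hP hO hna k m
          exact Set.mem_biUnion hs hm
        rw [this]
        exact Filter.univ_mem
      obtain ⟨s, hsk, hsx⟩ :=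
        (Ultrafilter.finite_biUnion_mem_iff (List.finite_length_eq Bool k)).mp huniv
      have hsS : s ∈ S k := ⟨hsk, hxinf _ (Filter.inter_mem hsx hx)⟩
      exact Set.mem_biUnion ((hSfin k).mem_toFinset.mpr hsS) hsx
  have hbound : ∀ k, μ (K U) ≤ 2 * lam (D k) := by
    intro k
    calc μ (K U) ≤ μ (Set.range (pure : ℕ → Ultrafilter ℕ) ∪
        ⋃ s ∈ (hSfin k).toFinset, K (Tt s)) := measure_mono (hcov k)
      _ ≤ μ (Set.range (pure : ℕ → Ultrafilter ℕ)) +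
          μ (⋃ s ∈ (hSfin k).toFinset, K (Tt s)) := measure_union_le _ _
      _ = μ (⋃ s ∈ (hSfin k).toFinset, K (Tt s)) := by
          rw [measure_pure_range μ hna, zero_add]
      _ ≤ ∑ s ∈ (hSfin k).toFinset, μ (K (Tt s)) := measure_biUnion_finset_le _ _
      _ ≤ ∑ s ∈ (hSfin k).toFinset, 2 * (1 / 2 : ℝ≥0∞) ^ k := by
          refine Finset.sum_le_sum fun s hs => ?_
          have := Tr_measure μ hP hO hna s
          rwa [((hSfin k).mem_toFinset.mp hs).1] at this
      _ = 2 * lam (D k) := by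
          rw [Finset.sum_const, nsmul_eq_mul, hDval k]
          ring
  have htend : Filter.Tendsto (fun k => 2 * lam (D k)) Filter.atTop (𝓝 0) := by
    have := ENNReal.Tendsto.const_mul (a := 2) hlim (Or.inr (by norm_num))
    simpa using this
  exact le_antisymm (ge_of_tendsto' htend hbound) zero_le

end MuAux

/-- For every non-atomic Radon measure `μ` on `βω` there is a full tree `𝒯`
of subsets of `ω` such that `μ [U] = 0` for every `U ⊆ ω` with `T_U` Lebesgue-null in `2^ω`.
Consequently, every ultrafilter which `𝒩`-diagonalizes full trees is a μ-point of `βω`.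
Here `lam` is the standard coin-flipping measure on `2^ω`, whose null sets form `𝒩`. -/
theorem tree_for_nonatomic_measure_and_diagonalizing_ultrafilters_are_muPoints
    (lam : Measure (ℕ → Bool))
    (hlam : ∀ v : List Bool, lam (Cyl v) = (1 / 2 : ℝ≥0∞) ^ v.length) :
    (∀ μ : Measure (Ultrafilter ℕ), IsRadon μ → (∀ y : Ultrafilter ℕ, μ {y} = 0) →
      ∃ T : List Bool → Set ℕ, IsTreeOfSubsets T ∧ IsFullTree T ∧
        ∀ U : Set ℕ, lam (TreeLimit T U) = 0 → μ {x : Ultrafilter ℕ | U ∈ x} = 0) ∧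
    (∀ 𝒰 : Ultrafilter ℕ,
      (∀ T : List Bool → Set ℕ, IsTreeOfSubsets T → IsFullTree T →
        ∃ X ∈ 𝒰, lam (TreeLimit T X) = 0) →
      IsMuPoint 𝒰) := by
  constructor
  · intro μ hR hna
    obtain ⟨hP, -, hO⟩ := hR
    exact ⟨MuAux.Tr μ hP hO hna, MuAux.Tr_isTree μ hP hO hna, MuAux.Tr_full μ hP hO hna,
      fun U hU => MuAux.main_measure μ hP hO hna lam hlam U hU⟩
  · intro 𝒰 hdiag μ hR hna
    obtain ⟨hP, -, hO⟩ := hR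
    obtain ⟨X, hX𝒰, hXnull⟩ := hdiag (MuAux.Tr μ hP hO hna)
      (MuAux.Tr_isTree μ hP hO hna) (MuAux.Tr_full μ hP hO hna)
    exact ⟨MuAux.K X, MuAux.isOpen_K X, hX𝒰,
      MuAux.main_measure μ hP hO hna lam hlam X hXnull⟩
end

section
/- Let ℐ be a σ-ideal on 2^ω containing all singletons. An ultrafilter 𝒰 on ω ℐ-diagonalizes trees if and only if 𝒰 is an ℐ-ultrafilter, i.e. for every function f : ω → 2^ω there is X ∈ 𝒰 such that the closure of f[X] in 2^ω belongs to ℐ. -/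
open MeasureTheory Topology ENNReal

lemma ofFn_take (x : ℕ → Bool) {k m : ℕ} (h : k ≤ m) :
    (List.ofFn fun i : Fin m => x i.val).take k = List.ofFn fun i : Fin k => x i.val := by
  apply List.ext_getElem
  · simp [Nat.min_eq_left h]
  · intro i h1 h2
    simp [List.getElem_take, List.getElem_ofFn]

lemma ofFn_prefix (x : ℕ → Bool) {k m : ℕ} (h : k ≤ m) :
    (List.ofFn fun i : Fin k => x i.val) <+: (List.ofFn fun i : Fin m => x i.val) :=
  (ofFn_take x h) ▸ List.take_prefix _ _

lemma ofFn_concat (x : ℕ → Bool) (k : ℕ) :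
    (List.ofFn fun i : Fin (k+1) => x i.val) = (List.ofFn fun i : Fin k => x i.val) ++ [x k] := by
  rw [List.ofFn_succ']
  simp [List.concat_eq_append]

lemma ofFn_eq_iff (x y : ℕ → Bool) (k : ℕ) :
    (List.ofFn fun i : Fin k => x i.val) = (List.ofFn fun i : Fin k => y i.val) ↔
      ∀ i < k, x i = y i := by
  rw [List.ofFn_inj]
  constructor
  · intro h i hi
    exact congrFun h ⟨i, hi⟩
  · intro h
    funext i
    exact h i.val i.isLt

lemma mem_closure_iff_agree (S : Set (ℕ → Bool)) (x : ℕ → Bool) :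
    x ∈ closure S ↔ ∀ k : ℕ, ∃ y ∈ S, ∀ i < k, y i = x i := by
  constructor
  · intro hx k
    have hop : IsOpen (Set.pi ({i | i < k} : Set ℕ) (fun i => ({x i} : Set Bool))) :=
      isOpen_set_pi (Set.finite_Iio k) (fun a _ => isOpen_discrete _)
    have hxmem : x ∈ Set.pi ({i | i < k} : Set ℕ) (fun i => ({x i} : Set Bool)) := by
      intro i _; rfl
    obtain ⟨y, hy1, hy2⟩ := (mem_closure_iff.mp hx) _ hop hxmem
    exact ⟨y, hy2, fun i hi => hy1 i hi⟩
  · intro h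
    rw [mem_closure_iff]
    intro O hO hxO
    obtain ⟨I, u, hIu, hsub⟩ := (isOpen_pi_iff.mp hO) x hxO
    obtain ⟨y, hy, hagree⟩ := h ((I.sup id) + 1)
    refine ⟨y, hsub ?_, hy⟩
    intro i hi
    rw [hagree i (Nat.lt_succ_of_le (Finset.le_sup (f := id) hi))]
    exact (hIu i hi).2

/-- A "true tree" refinement: `Utree T l` is the corrected tree set for the
reversed sequence `l` (so `Utree T s.reverse` corresponds to `T s`). -/
def Utree (T : List Bool → Set ℕ) : List Bool → Set ℕ
  | [] => Set.univ
  | (false :: l) => (Utree T l ∩ T ((false :: l).reverse)) \ T ((true :: l).reverse)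
  | (true :: l) => Utree T l \ ((Utree T l ∩ T ((false :: l).reverse)) \ T ((true :: l).reverse))

lemma Utree_true (T : List Bool → Set ℕ) (l : List Bool) :
    Utree T (true :: l) = Utree T l \ Utree T (false :: l) := rfl

lemma Utree_sub (T : List Bool → Set ℕ) (b : Bool) (l : List Bool) :
    Utree T (b :: l) ⊆ Utree T l := by
  cases b <;> (intro n hn; simp [Utree] at hn; tauto)

lemma Utree_disj (T : List Bool → Set ℕ) :
    ∀ l l' : List Bool, l.length = l'.length → l ≠ l' → Utree T l ∩ Utree T l' = ∅ := by
  intro l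
  induction l with
  | nil => intro l' hlen hne; cases l' with
    | nil => exact absurd rfl hne
    | cons b m => simp at hlen
  | cons b m ih =>
    intro l' hlen hne
    cases l' with
    | nil => simp at hlen
    | cons b' m' =>
      simp only [List.length_cons, Nat.add_right_cancel_iff] at hlen
      by_cases hm : m = m'
      · subst hm
        have hb : b ≠ b' := by intro h; exact hne (by rw [h])
        ext n
        simp only [Set.mem_inter_iff, Set.mem_empty_iff_false, iff_false]
        rintro ⟨h1, h2⟩
        cases b <;> cases b'
        · exact hb rfl
        · rw [Utree_true] at h2; exact h2.2 h1
        · rw [Utree_true] at h1; exact h1.2 h2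
        · exact hb rfl
      · have := ih m' hlen hm
        apply Set.eq_empty_of_subset_empty
        intro n hn
        rw [← this]
        exact ⟨Utree_sub T b m hn.1, Utree_sub T b' m' hn.2⟩

lemma Utree_split (T : List Bool → Set ℕ) (l : List Bool) {n : ℕ} (hn : n ∈ Utree T l)
    (hf : n ∉ Utree T (false :: l)) : n ∈ Utree T (true :: l) := by
  rw [Utree_true]; exact ⟨hn, hf⟩

/-- The diff between the original tree set and its correction is finite. -/
lemma Utree_diff_finite (T : List Bool → Set ℕ)
    (h1 : ∀ s t : List Bool, s <+: t → (T t \ T s).Finite)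
    (h3 : ∀ s t : List Bool, s.length = t.length → s ≠ t → (T s ∩ T t).Finite) :
    ∀ l : List Bool, (T l.reverse \ Utree T l).Finite := by
  intro l
  induction l with
  | nil =>
    have : T ([] : List Bool).reverse \ Utree T [] = ∅ := by
      simp [Utree]
    rw [this]; exact Set.finite_empty
  | cons b m ih =>
    have hpre0 : m.reverse <+: (m.reverse ++ [false]) := List.prefix_append _ _
    have hpre1 : m.reverse <+: (m.reverse ++ [true]) := List.prefix_append _ _
    have hne : (m.reverse ++ [false]) ≠ (m.reverse ++ [true]) := by simp
    have hlen : (m.reverse ++ [false]).length = (m.reverse ++ [true]).length := by simp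
    have hfin : ((T (m.reverse ++ [false]) \ T m.reverse) ∪ (T m.reverse \ Utree T m)
        ∪ (T (m.reverse ++ [false]) ∩ T (m.reverse ++ [true]))
        ∪ (T (m.reverse ++ [true]) \ T m.reverse)).Finite := by
      exact (((h1 _ _ hpre0).union ih).union (h3 _ _ hlen hne)).union (h1 _ _ hpre1)
    apply hfin.subset
    intro n hn
    rw [List.reverse_cons] at hn
    cases b with
    | false =>
      obtain ⟨hn1, hn2⟩ := hn
      simp only [Utree, List.reverse_cons, Set.mem_diff, Set.mem_inter_iff, not_and,
        not_not] at hn2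
      by_cases hU : n ∈ Utree T m
      · have := hn2 ⟨hU, hn1⟩
        exact Or.inl (Or.inr ⟨hn1, this⟩)
      · by_cases hTm : n ∈ T m.reverse
        · exact Or.inl (Or.inl (Or.inr ⟨hTm, hU⟩))
        · exact Or.inl (Or.inl (Or.inl ⟨hn1, hTm⟩))
    | true =>
      obtain ⟨hn1, hn2⟩ := hn
      rw [Utree_true] at hn2
      simp only [Set.mem_diff, not_and, not_not] at hn2
      by_cases hU : n ∈ Utree T m
      · have hf : n ∈ Utree T (false :: m) := hn2 hU
        have : n ∈ T (m.reverse ++ [false]) := by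
          simp only [Utree, List.reverse_cons] at hf
          exact hf.1.2
        exact Or.inl (Or.inr ⟨this, hn1⟩)
      · by_cases hTm : n ∈ T m.reverse
        · exact Or.inl (Or.inl (Or.inr ⟨hTm, hU⟩))
        · exact Or.inr ⟨hn1, hTm⟩

open Classical in
noncomputable def gseq (T : List Bool → Set ℕ) (n : ℕ) : ℕ → List Bool
  | 0 => []
  | (k+1) => (if n ∈ Utree T (false :: gseq T n k) then false else true) :: gseq T n k

open Classical in
noncomputable def fseq (T : List Bool → Set ℕ) (n : ℕ) (k : ℕ) : Bool :=
  if n ∈ Utree T (false :: gseq T n k) then false else true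

lemma gseq_succ (T : List Bool → Set ℕ) (n k : ℕ) :
    gseq T n (k+1) = fseq T n k :: gseq T n k := rfl

lemma gseq_length (T : List Bool → Set ℕ) (n : ℕ) : ∀ k, (gseq T n k).length = k := by
  intro k
  induction k with
  | zero => rfl
  | succ k ih => rw [gseq_succ]; simp [ih]

lemma gseq_mem (T : List Bool → Set ℕ) (n : ℕ) : ∀ k, n ∈ Utree T (gseq T n k) := by
  intro k
  induction k with
  | zero => exact Set.mem_univ n
  | succ k ih =>
    rw [gseq_succ]
    unfold fseq
    by_cases h : n ∈ Utree T (false :: gseq T n k)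
    · simpa [h] using h
    · simp only [h, if_false]
      exact Utree_split T _ ih h

lemma gseq_ofFn (T : List Bool → Set ℕ) (n : ℕ) :
    ∀ k, (List.ofFn fun i : Fin k => fseq T n i.val) = (gseq T n k).reverse := by
  intro k
  induction k with
  | zero => rfl
  | succ k ih =>
    rw [ofFn_concat (fseq T n) k, ih, gseq_succ, List.reverse_cons]

lemma treeLimit_subset_closure (T : List Bool → Set ℕ)
    (h1 : ∀ s t : List Bool, s <+: t → (T t \ T s).Finite)
    (h3 : ∀ s t : List Bool, s.length = t.length → s ≠ t → (T s ∩ T t).Finite)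
    (X : Set ℕ) :
    TreeLimit T X ⊆ closure ((fun n => fseq T n) '' X) := by
  intro x hx
  rw [mem_closure_iff_agree]
  intro k
  set s : List Bool := List.ofFn fun i : Fin k => x i.val with hs
  have hinf : (T s ∩ X).Infinite := hx k
  have hdf : (T (s.reverse.reverse) \ Utree T s.reverse).Finite :=
    Utree_diff_finite T h1 h3 s.reverse
  rw [List.reverse_reverse] at hdf
  have hinf2 : ((T s ∩ X) \ (T s \ Utree T s.reverse)).Nonempty :=
    (hinf.diff hdf).nonempty
  obtain ⟨n, ⟨⟨hnT, hnX⟩, hn2⟩⟩ := hinf2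
  have hnU : n ∈ Utree T s.reverse := by
    by_contra h
    exact hn2 ⟨hnT, h⟩
  -- identify gseq T n k with s.reverse
  have hlen : (gseq T n k).length = s.reverse.length := by
    rw [gseq_length, List.length_reverse, hs, List.length_ofFn]
  have hgs : gseq T n k = s.reverse := by
    by_contra hne
    have := Utree_disj T _ _ hlen hne
    have : n ∈ (∅ : Set ℕ) := this ▸ ⟨gseq_mem T n k, hnU⟩
    exact this
  refine ⟨fseq T n, ⟨n, hnX, rfl⟩, ?_⟩
  have : (List.ofFn fun i : Fin k => fseq T n i.val) = List.ofFn fun i : Fin k => x i.val := by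
    rw [gseq_ofFn, hgs, List.reverse_reverse]
  exact (ofFn_eq_iff _ _ k).mp this

/-- The tree derived from `f`: level-`k` cylinders of values of `f`. -/
def fTree (f : ℕ → (ℕ → Bool)) (s : List Bool) : Set ℕ :=
  {n | (List.ofFn fun i : Fin s.length => f n i.val) = s}

lemma fTree_mono (f : ℕ → (ℕ → Bool)) {s t : List Bool} (h : s <+: t) :
    fTree f t ⊆ fTree f s := by
  intro n hn
  simp only [fTree, Set.mem_setOf_eq] at hn ⊢
  have hle : s.length ≤ t.length := h.length_le
  have := congrArg (List.take s.length) hn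
  rw [ofFn_take (f n) hle] at this
  rw [this]
  exact (List.prefix_iff_eq_take.mp h).symm

lemma fTree_isTree (f : ℕ → (ℕ → Bool)) : IsTreeOfSubsets (fTree f) := by
  refine ⟨fun s t h => ?_, fun k => ?_, fun s t hlen hne => ?_⟩
  · have : fTree f t \ fTree f s = ∅ :=
      Set.diff_eq_empty.mpr (fTree_mono f h)
    rw [this]; exact Set.finite_empty
  · have : ((⋃ s ∈ {l : List Bool | l.length = k}, fTree f s)ᶜ : Set ℕ) = ∅ := by
      rw [Set.compl_empty_iff]
      ext n
      simp only [Set.mem_iUnion, Set.mem_setOf_eq, Set.mem_univ, iff_true]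
      refine ⟨List.ofFn fun i : Fin k => f n i.val, by simp, ?_⟩
      simp [fTree]
    rw [this]; exact Set.finite_empty
  · have : fTree f s ∩ fTree f t = ∅ := by
      ext n
      simp only [Set.mem_inter_iff, fTree, Set.mem_setOf_eq, Set.mem_empty_iff_false, iff_false]
      rintro ⟨hs, ht⟩
      apply hne
      rw [← hs, ← ht, hlen]
    rw [this]; exact Set.finite_empty

lemma closure_subset_fTree (f : ℕ → (ℕ → Bool)) (X : Set ℕ) :
    closure (f '' X) ⊆ TreeLimit (fTree f) X ∪ ⋃ n, {f n} := by
  intro x hx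
  by_cases hlim : x ∈ TreeLimit (fTree f) X
  · exact Or.inl hlim
  right
  simp only [TreeLimit, Set.mem_setOf_eq, not_forall] at hlim
  obtain ⟨K, hK⟩ := hlim
  rw [Set.not_infinite] at hK
  -- the decreasing chain of nonempty sets A k = fTree f (x↾k) ∩ X
  set A : ℕ → Set ℕ := fun k => fTree f (List.ofFn fun i : Fin k => x i.val) ∩ X with hA
  have hchain : ∀ {k m : ℕ}, k ≤ m → A m ⊆ A k := by
    intro k m hkm
    exact Set.inter_subset_inter_left X
      (fTree_mono f (by simpa [List.length_ofFn] using ofFn_prefix x hkm))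
  have hne : ∀ k, (A k).Nonempty := by
    intro k
    obtain ⟨y, ⟨n, hnX, rfl⟩, hag⟩ := (mem_closure_iff_agree _ x).mp hx k
    refine ⟨n, ?_, hnX⟩
    simp only [fTree, Set.mem_setOf_eq, List.length_ofFn]
    exact (ofFn_eq_iff _ _ k).mpr hag
  -- pigeonhole: some n lies in all A k
  have hKfin : (A K).Finite := hK
  haveI : Finite ↥(A K) := hKfin.to_subtype
  choose c hc using hne
  have hcK : ∀ k, c (K + k) ∈ A K := fun k => hchain (Nat.le_add_right K k) (hc (K + k))
  obtain ⟨⟨n, hnAK⟩, hfib⟩ :=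
    Finite.exists_infinite_fiber (fun k : ℕ => (⟨c (K + k), hcK k⟩ : ↥(A K)))
  rw [Set.infinite_coe_iff] at hfib
  have hnall : ∀ m, n ∈ A m := by
    intro m
    have : ¬ (({k | (⟨c (K + k), hcK k⟩ : ↥(A K)) = ⟨n, hnAK⟩} : Set ℕ) ⊆ Set.Iic m) := by
      intro hsub
      exact hfib ((Set.finite_Iic m).subset hsub)
    rw [Set.not_subset] at this
    obtain ⟨k, hk1, hk2⟩ := this
    have hmk : m < k := lt_of_not_ge (fun h => hk2 (Set.mem_Iic.mpr h))
    have hkm : m ≤ K + k := le_trans (le_of_lt hmk) (Nat.le_add_left k K)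
    have hcn : c (K + k) = n := congrArg Subtype.val hk1
    exact hchain hkm (hcn ▸ hc (K + k))
  have hxf : x = f n := by
    funext i
    have := (hnall (i + 1)).1
    simp only [fTree, Set.mem_setOf_eq, List.length_ofFn] at this
    exact ((ofFn_eq_iff (f n) x (i + 1)).mp this i (Nat.lt_succ_self i)).symm
  exact Set.mem_iUnion.mpr ⟨n, hxf ▸ rfl⟩

/-- Let `I` be a σ-ideal on `2^ω` containing all singletons. An ultrafilter
`𝒰` on `ω` `I`-diagonalizes trees if and only if `𝒰` is an `I`-ultrafilter, i.e. for every
`f : ω → 2^ω` there is `X ∈ 𝒰` with `closure (f '' X) ∈ I`. -/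
theorem diagonalizes_trees_iff_I_ultrafilter
    (I : Set (Set (ℕ → Bool)))
    (hmono : ∀ s t : Set (ℕ → Bool), s ⊆ t → t ∈ I → s ∈ I)
    (hsigma : ∀ f : ℕ → Set (ℕ → Bool), (∀ n, f n ∈ I) → (⋃ n, f n) ∈ I)
    (hsing : ∀ x : ℕ → Bool, {x} ∈ I)
    (𝒰 : Ultrafilter ℕ) :
    (∀ T : List Bool → Set ℕ, IsTreeOfSubsets T → ∃ X ∈ 𝒰, TreeLimit T X ∈ I) ↔
      (∀ f : ℕ → (ℕ → Bool), ∃ X ∈ 𝒰, closure (f '' X) ∈ I) := by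
  constructor
  · intro hdiag f
    obtain ⟨X, hXU, hXI⟩ := hdiag (fTree f) (fTree_isTree f)
    refine ⟨X, hXU, ?_⟩
    set g : ℕ → Set (ℕ → Bool) :=
      fun n => Nat.rec (TreeLimit (fTree f) X) (fun m _ => {f m}) n with hg
    have hgI : (⋃ n, g n) ∈ I := by
      apply hsigma
      intro n
      cases n with
      | zero => exact hXI
      | succ m => exact hsing (f m)
    refine hmono _ _ ?_ hgI
    intro x hx
    rcases closure_subset_fTree f X hx with h | h
    · exact Set.mem_iUnion.mpr ⟨0, h⟩
    · obtain ⟨n, hn⟩ := Set.mem_iUnion.mp h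
      exact Set.mem_iUnion.mpr ⟨n + 1, hn⟩
  · intro hult T hT
    obtain ⟨X, hXU, hcl⟩ := hult (fun n => fseq T n)
    exact ⟨X, hXU, hmono _ _ (treeLimit_subset_closure T hT.1 hT.2.2 X) hcl⟩
end

section
/- An ultrafilter 𝒰 on ω 𝒩-diagonalizes full trees if and only if it 𝒩-diagonalizes all trees of subsets of ω, where 𝒩 is the σ-ideal of Lebesgue-null subsets of 2^ω. -/
open MeasureTheory Topology ENNReal

namespace Aux19

/-- restriction of `x` to its first `n` values, as a list -/
def res (x : ℕ → Bool) (n : ℕ) : List Bool := List.ofFn fun i : Fin n => x i.val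

@[simp] lemma res_length (x : ℕ → Bool) (n : ℕ) : (res x n).length = n := by
  simp [res]

lemma res_get (x : ℕ → Bool) (n : ℕ) (i : Fin (res x n).length) :
    (res x n).get i = x i.val := by
  rw [List.get_eq_getElem]
  simp [res]

lemma mem_Cyl {x : ℕ → Bool} {v : List Bool} :
    x ∈ Cyl v ↔ ∀ i : Fin v.length, x i.val = v.get i := Iff.rfl

lemma mem_Cyl_iff_res {x : ℕ → Bool} {v : List Bool} :
    x ∈ Cyl v ↔ res x v.length = v := by
  constructor
  · intro h
    apply List.ext_get (by simp)
    intro i h1 h2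
    have := h ⟨i, h2⟩
    simp only [res, List.getElem_ofFn]
    simpa [List.get_eq_getElem] using this
  · intro h i
    rcases i with ⟨i, hi⟩
    have hi' : i < (res x v.length).length := by simpa using hi
    have h2 := List.getElem_of_eq h hi'
    simp only [res, List.getElem_ofFn] at h2
    simpa [List.get_eq_getElem] using h2

lemma self_mem_Cyl (x : ℕ → Bool) (n : ℕ) : x ∈ Cyl (res x n) := by
  rw [mem_Cyl_iff_res, res_length]

lemma res_take (x : ℕ → Bool) {n m : ℕ} (h : n ≤ m) : (res x m).take n = res x n := by
  apply List.ext_get (by simp [h])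
  intro i h1 h2
  simp only [List.get_eq_getElem, List.getElem_take, res]
  rw [List.getElem_ofFn, List.getElem_ofFn]

lemma res_prefix (x : ℕ → Bool) {n m : ℕ} (h : n ≤ m) : res x n <+: res x m := by
  rw [← res_take x h]; exact List.take_prefix _ _

lemma Cyl_anti {v w : List Bool} (h : v <+: w) : Cyl w ⊆ Cyl v := by
  intro x hx
  rw [mem_Cyl_iff_res] at hx ⊢
  obtain ⟨t, rfl⟩ := h
  have : res x (v.length + t.length) = v ++ t := by simpa using hx
  rw [← res_take x (Nat.le_add_right v.length t.length), this, List.take_left]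

lemma res_snoc (x : ℕ → Bool) (n : ℕ) : res x n ++ [x n] = res x (n + 1) := by
  conv_rhs => rw [res, List.ofFn_succ']
  simp [res, List.concat_eq_append]

lemma mem_Cyl_snoc {x : ℕ → Bool} {v : List Bool} (h : x ∈ Cyl v) :
    x ∈ Cyl (v ++ [x v.length]) := by
  rw [mem_Cyl_iff_res] at h
  have : v ++ [x v.length] = res x (v.length + 1) := by rw [← res_snoc, h]
  rw [this]; exact self_mem_Cyl _ _

lemma Cyl_nil : Cyl [] = Set.univ := by
  ext x; constructor
  · intro _; trivial
  · intro _ i; exact i.elim0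

lemma mem_Cyl_cons {x : ℕ → Bool} {a : Bool} {v : List Bool} :
    x ∈ Cyl (a :: v) ↔ x 0 = a ∧ (fun n => x (n + 1)) ∈ Cyl v := by
  constructor
  · intro h
    refine ⟨h ⟨0, by simp⟩, fun i => ?_⟩
    have := h ⟨i.val + 1, by simp [Nat.succ_lt_succ i.2]⟩
    simpa using this
  · rintro ⟨h0, h1⟩ i
    rcases i with ⟨i, hi⟩
    cases i with
    | zero => simpa using h0
    | succ j =>
      have := h1 ⟨j, by simpa using hi⟩
      simpa using this

/-- two cylinders: comparable or disjoint -/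
lemma prefix_trichotomy : ∀ v w : List Bool, v <+: w ∨ w <+: v ∨ Cyl v ∩ Cyl w = ∅ := by
  intro v
  induction v with
  | nil => intro w; exact Or.inl (List.nil_prefix)
  | cons a v ih =>
    intro w
    cases w with
    | nil => exact Or.inr (Or.inl List.nil_prefix)
    | cons b w' =>
      by_cases hab : a = b
      · subst hab
        rcases ih w' with h | h | h
        · exact Or.inl (List.cons_prefix_cons.2 ⟨rfl, h⟩)
        · exact Or.inr (Or.inl (List.cons_prefix_cons.2 ⟨rfl, h⟩))
        · refine Or.inr (Or.inr ?_)
          ext x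
          simp only [Set.mem_inter_iff, Set.mem_empty_iff_false, iff_false]
          rintro ⟨h1, h2⟩
          rw [mem_Cyl_cons] at h1 h2
          have : (fun n => x (n+1)) ∈ Cyl v ∩ Cyl w' := ⟨h1.2, h2.2⟩
          rw [h] at this; exact this
      · refine Or.inr (Or.inr ?_)
        ext x
        simp only [Set.mem_inter_iff, Set.mem_empty_iff_false, iff_false]
        rintro ⟨h1, h2⟩
        rw [mem_Cyl_cons] at h1 h2
        exact hab (h1.1 ▸ h2.1 ▸ rfl)

lemma prefix_eq_of_length {u v w : List Bool} (h1 : u <+: w) (h2 : v <+: w)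
    (h : u.length = v.length) : u = v := by
  rw [List.prefix_iff_eq_take] at h1 h2
  rw [h1, h2, h]

end Aux19

namespace Aux19

/-! ### The exact residue tree -/

def ofBits : List Bool → ℕ
  | [] => 0
  | b :: r => b.toNat + 2 * ofBits r

def Stree (s : List Bool) : Set ℕ := {n | n % 2 ^ s.length = ofBits s}

def toBits : ℕ → ℕ → List Bool
  | 0, _ => []
  | k + 1, m => (decide (m % 2 = 1)) :: toBits k (m / 2)

lemma ofBits_lt : ∀ s : List Bool, ofBits s < 2 ^ s.length := by
  intro s
  induction s with
  | nil => simp [ofBits]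
  | cons b r ih =>
    simp only [ofBits, List.length_cons, pow_succ]
    cases b <;> simp [Bool.toNat] <;> omega

lemma ofBits_append (s t : List Bool) :
    ofBits (s ++ t) = ofBits s + 2 ^ s.length * ofBits t := by
  induction s with
  | nil => simp [ofBits]
  | cons b r ih => simp [ofBits, ih, pow_succ]; ring

lemma ofBits_inj : ∀ s t : List Bool, s.length = t.length → ofBits s = ofBits t → s = t := by
  intro s
  induction s with
  | nil =>
    intro t h _
    cases t with
    | nil => rfl
    | cons c q => simp at h
  | cons b r ih =>
    intro t h he
    cases t with
    | nil => simp at h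
    | cons c q =>
      simp only [ofBits] at he
      have hb : b = c := by
        cases b <;> cases c <;> simp [Bool.toNat] at he ⊢ <;> omega
      subst hb
      have : ofBits r = ofBits q := by cases b <;> simp [Bool.toNat] at he <;> omega
      rw [ih q (by simpa using h) this]

lemma Stree_anti {s t : List Bool} (h : s <+: t) : Stree t ⊆ Stree s := by
  obtain ⟨r, rfl⟩ := h
  intro n hn
  simp only [Stree, Set.mem_setOf_eq] at hn ⊢
  have h1 : (2 : ℕ) ^ s.length ∣ 2 ^ (s ++ r).length := by
    apply pow_dvd_pow; simp
  rw [← Nat.mod_mod_of_dvd n h1, hn, ofBits_append,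
    Nat.add_mul_mod_self_left, Nat.mod_eq_of_lt (ofBits_lt s)]

lemma Stree_disjoint {s t : List Bool} (hlen : s.length = t.length) (hne : s ≠ t) :
    Stree s ∩ Stree t = ∅ := by
  ext n
  simp only [Stree, Set.mem_inter_iff, Set.mem_setOf_eq, Set.mem_empty_iff_false, iff_false]
  rintro ⟨h1, h2⟩
  exact hne (ofBits_inj s t hlen (by rw [← h1, ← h2, hlen]))

lemma Stree_infinite (s : List Bool) : (Stree s).Infinite := by
  apply Set.infinite_of_injective_forall_mem
    (f := fun m : ℕ => ofBits s + 2 ^ s.length * m)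
  case hi =>
    intro a b hab
    simp only at hab
    have h1 := Nat.add_left_cancel hab
    exact Nat.eq_of_mul_eq_mul_left (Nat.pow_pos (by norm_num)) h1
  case hf =>
    intro m
    simp only [Stree, Set.mem_setOf_eq, Nat.add_mul_mod_self_left]
    exact Nat.mod_eq_of_lt (ofBits_lt s)

lemma toBits_length : ∀ k m, (toBits k m).length = k := by
  intro k
  induction k with
  | zero => intro m; rfl
  | succ k ih => intro m; simp [toBits, ih]

lemma ofBits_toBits : ∀ k m, ofBits (toBits k m) = m % 2 ^ k := by
  intro k
  induction k with
  | zero => intro m; simp [toBits, ofBits, Nat.mod_one]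
  | succ k ih =>
    intro m
    simp only [toBits, ofBits, ih]
    have hd : (decide (m % 2 = 1)).toNat = m % 2 := by
      rcases Nat.mod_two_eq_zero_or_one m with h | h <;> simp [h]
    have h2 : m % (2 ^ k * 2) = m % 2 + 2 * (m / 2 % 2 ^ k) := by
      rw [mul_comm]; exact Nat.mod_mul
    rw [hd, pow_succ]
    omega

lemma mem_Stree_toBits (k n : ℕ) : n ∈ Stree (toBits k n) := by
  simp [Stree, toBits_length, ofBits_toBits]

/-! ### Measure facts -/

lemma measurableSet_Cyl (v : List Bool) : MeasurableSet (Cyl v) := by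
  have : Cyl v = ⋂ i : Fin v.length, (fun x : ℕ → Bool => x i.val) ⁻¹' {v.get i} := by
    ext x; simp [Cyl, Set.mem_iInter]
  rw [this]
  exact MeasurableSet.iInter fun i =>
    (measurable_pi_apply i.val) (measurableSet_singleton _)

lemma isOpen_Cyl (v : List Bool) : IsOpen (Cyl v) := by
  have : Cyl v = ⋂ i : Fin v.length, (fun x : ℕ → Bool => x i.val) ⁻¹' {v.get i} := by
    ext x; simp [Cyl, Set.mem_iInter]
  rw [this]
  exact isOpen_iInter_of_finite fun i =>
    (continuous_apply i.val).isOpen_preimage _ (isOpen_discrete _)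

section Measure

variable {lam : Measure (ℕ → Bool)}
variable (hlam : ∀ v : List Bool, lam (Cyl v) = (1 / 2 : ℝ≥0∞) ^ v.length)

include hlam

lemma lam_univ : lam Set.univ = 1 := by
  rw [← Cyl_nil, hlam]; simp

lemma lam_finite : IsFiniteMeasure lam :=
  ⟨by rw [lam_univ hlam]; exact one_lt_top⟩

lemma lam_singleton (x : ℕ → Bool) : lam {x} = 0 := by
  by_contra h
  obtain ⟨n, hn⟩ := ENNReal.exists_inv_two_pow_lt h
  have hsub : {x} ⊆ Cyl (res x n) := by
    intro y hy; rw [Set.mem_singleton_iff] at hy; rw [hy]; exact self_mem_Cyl x n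
  have := measure_mono (μ := lam) hsub
  rw [hlam, res_length] at this
  have h2 : (1 / 2 : ℝ≥0∞) ^ n = 2⁻¹ ^ n := by norm_num
  rw [h2] at this
  exact absurd (lt_of_le_of_lt this hn) (lt_irrefl _)

lemma lam_countable {A : Set (ℕ → Bool)} (hA : A.Countable) : lam A = 0 := by
  have : A = ⋃ x ∈ A, {x} := by simp
  rw [this]
  rw [measure_biUnion_null_iff hA]
  exact fun x _ => lam_singleton hlam x

/-- Every `lam`-null set is covered by countably many cylinders of small total measure. -/
lemma exists_cyl_cover {A : Set (ℕ → Bool)} (hA : lam A = 0) {ε : ℝ≥0∞} (hε : 0 < ε) :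
    ∃ F : Set (List Bool), F.Countable ∧ (A ⊆ ⋃ v ∈ F, Cyl v) ∧
      ∑' v : F, lam (Cyl (v : List Bool)) ≤ ε := by
  classical
  haveI := lam_finite hlam
  set B := toMeasurable lam A with hB
  have hBA : A ⊆ B := subset_toMeasurable lam A
  have hB0 : lam B < ε := by rw [measure_toMeasurable]; rw [hA]; exact hε
  obtain ⟨U, hUB, hUopen, hUe⟩ := Set.exists_isOpen_lt_of_lt B ε hB0
  -- minimal cylinders inside U
  set F : Set (List Bool) := {v | Cyl v ⊆ U ∧ ∀ m < v.length, ¬ Cyl (v.take m) ⊆ U} with hF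
  have hcount : F.Countable := Set.to_countable F
  have hcover : U ⊆ ⋃ v ∈ F, Cyl v := by
    intro x hx
    have hex : ∃ n, Cyl (res x n) ⊆ U := by
      obtain ⟨I, u, hIu, hsub⟩ := isOpen_pi_iff.1 hUopen x hx
      refine ⟨I.sup id + 1, fun y hy => hsub ?_⟩
      intro a ha
      have haval : a < I.sup id + 1 := Nat.lt_succ_of_le (Finset.le_sup (f := id) ha)
      have : y a = x a := by
        rw [mem_Cyl_iff_res] at hy
        have := List.getElem_of_eq hy (by simpa using haval)
        simp only [res, List.getElem_ofFn] at this
        simpa using this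
      rw [this]
      exact (hIu a ha).2
    set n0 := Nat.find hex with hn0
    have hmem : res x n0 ∈ F := by
      refine ⟨Nat.find_spec hex, ?_⟩
      intro m hm
      rw [res_length] at hm
      rw [res_take x (le_of_lt hm)]
      exact Nat.find_min hex hm
    exact Set.mem_biUnion hmem (self_mem_Cyl x n0)
  have hdisj : F.PairwiseDisjoint Cyl := by
    intro v hv w hw hvw
    rcases prefix_trichotomy v w with h | h | h
    · exfalso
      have hlt : v.length < w.length := by
        rcases Nat.lt_or_ge v.length w.length with h' | h'
        · exact h'
        · exact (hvw (prefix_eq_of_length h (List.prefix_refl w)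
            (le_antisymm h.length_le h'))).elim
      have := hw.2 v.length hlt
      rw [← List.prefix_iff_eq_take.1 h] at this
      exact this hv.1
    · exfalso
      have hlt : w.length < v.length := by
        rcases Nat.lt_or_ge w.length v.length with h' | h'
        · exact h'
        · exact (hvw (prefix_eq_of_length h (List.prefix_refl v)
            (le_antisymm h.length_le h')).symm).elim
      have := hv.2 w.length hlt
      rw [← List.prefix_iff_eq_take.1 h] at this
      exact this hw.1
    · exact Set.disjoint_iff_inter_eq_empty.2 h
  refine ⟨F, hcount, fun a ha => hcover (hUB (hBA ha)), ?_⟩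
  have hsum := measure_biUnion (μ := lam) hcount hdisj (fun v _ => measurableSet_Cyl v)
  rw [← hsum]
  exact le_of_lt (lt_of_le_of_lt (measure_mono (Set.iUnion₂_subset fun v hv => hv.1)) hUe)

end Measure

end Aux19

namespace Aux19

/-! ### Tree combinatorics -/

section Tree

variable {T : List Bool → Set ℕ}

lemma incomp_finite (hT : IsTreeOfSubsets T) {v w : List Bool}
    (h1 : ¬ v <+: w) (h2 : ¬ w <+: v) : (T v ∩ T w).Finite := by
  set m := min v.length w.length with hm
  have hvm : m ≤ v.length := min_le_left _ _
  have hwm : m ≤ w.length := min_le_right _ _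
  have hne : v.take m ≠ w.take m := by
    intro he
    rcases le_total v.length w.length with hle | hle
    · have hmv : m = v.length := by omega
      apply h1
      rw [List.prefix_iff_eq_take]
      calc v = v.take m := by rw [hmv, List.take_length]
        _ = w.take m := he
        _ = w.take v.length := by rw [hmv]
    · have hmw : m = w.length := by omega
      apply h2
      rw [List.prefix_iff_eq_take]
      calc w = w.take m := by rw [hmw, List.take_length]
        _ = v.take m := he.symm
        _ = v.take w.length := by rw [hmw]
  have hlen : (v.take m).length = (w.take m).length := by
    simp [List.length_take]; omega
  have hfin3 := hT.2.2 (v.take m) (w.take m) hlen hne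
  have hf1 := hT.1 (v.take m) v (List.take_prefix _ _)
  have hf2 := hT.1 (w.take m) w (List.take_prefix _ _)
  apply Set.Finite.subset (hf1.union (hf2.union hfin3))
  intro x hx
  simp only [Set.mem_inter_iff] at hx
  simp only [Set.mem_union, Set.mem_diff, Set.mem_inter_iff]
  by_cases hxv : x ∈ T (v.take m)
  · by_cases hxw : x ∈ T (w.take m)
    · exact Or.inr (Or.inr ⟨hxv, hxw⟩)
    · exact Or.inr (Or.inl ⟨hx.2, hxw⟩)
  · exact Or.inl ⟨hx.1, hxv⟩

end Tree

/-- The set of branches all of whose nodes carry infinite sets. -/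
def Branches (T : List Bool → Set ℕ) : Set (ℕ → Bool) := {x | ∀ k, (T (res x k)).Infinite}

lemma treeLimit_subset_branches (T : List Bool → Set ℕ) (X : Set ℕ) :
    TreeLimit T X ⊆ Branches T :=
  fun _x hx k => ((hx k).mono Set.inter_subset_left)

lemma isClosed_branches (T : List Bool → Set ℕ) : IsClosed (Branches T) := by
  rw [← isOpen_compl_iff, isOpen_iff_mem_nhds]
  intro x hx
  simp only [Set.mem_compl_iff, Branches, Set.mem_setOf_eq, not_forall] at hx
  obtain ⟨k, hk⟩ := hx
  rw [mem_nhds_iff]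
  refine ⟨Cyl (res x k), ?_, isOpen_Cyl _, self_mem_Cyl x k⟩
  intro y hy
  simp only [Set.mem_compl_iff, Branches, Set.mem_setOf_eq, not_forall]
  refine ⟨k, ?_⟩
  rw [mem_Cyl_iff_res, res_length] at hy
  rw [hy]; exact hk

/-! ### Splitting nodes of a perfect set -/

section Split

variable (D : Set (ℕ → Bool))

def InD (s : List Bool) : Prop := (D ∩ Cyl s).Nonempty

def Splits (s : List Bool) : Prop := InD D (s ++ [false]) ∧ InD D (s ++ [true])

variable {D}

lemma Splits.inD {s : List Bool} (h : Splits D s) : InD D s := by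
  obtain ⟨x, hxD, hxc⟩ := h.1
  exact ⟨x, hxD, Cyl_anti (List.prefix_append s [false]) hxc⟩

lemma splits_of_both {u : List Bool} {c c' : Bool} (hne : c ≠ c')
    (h1 : InD D (u ++ [c])) (h2 : InD D (u ++ [c'])) : Splits D u := by
  cases c
  · cases c'
    · exact absurd rfl hne
    · exact ⟨h1, h2⟩
  · cases c'
    · exact ⟨h2, h1⟩
    · exact absurd rfl hne

lemma res_congr {x z : ℕ → Bool} {i : ℕ} (h : ∀ j < i, x j = z j) : res x i = res z i := by
  apply List.ext_get (by simp)
  intro j h1 h2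
  simp only [List.get_eq_getElem, res, List.getElem_ofFn]
  exact h j (by simpa using h1)

lemma splits_res {x z : ℕ → Bool} (hx : x ∈ D) (hz : z ∈ D) {i : ℕ}
    (hagree : ∀ j < i, x j = z j) (hne : x i ≠ z i) : Splits D (res x i) := by
  apply splits_of_both hne
  · refine ⟨x, hx, ?_⟩
    rw [res_snoc]
    exact self_mem_Cyl x (i + 1)
  · refine ⟨z, hz, ?_⟩
    rw [res_congr hagree, res_snoc]
    exact self_mem_Cyl z (i + 1)

lemma exists_splits_ext (hD : Preperfect D) {s : List Bool} (hs : InD D s) :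
    ∃ u, s <+: u ∧ Splits D u := by
  classical
  obtain ⟨x, hxD, hxc⟩ := hs
  have hacc := hD x hxD
  rw [accPt_iff_nhds] at hacc
  obtain ⟨z, ⟨hzU, hzD⟩, hzx⟩ := hacc (Cyl (res x s.length))
    ((isOpen_Cyl _).mem_nhds (self_mem_Cyl _ _))
  have hxz : ∃ i, x i ≠ z i := by
    by_contra hc
    push_neg at hc
    exact hzx (funext fun i => (hc i).symm)
  have hdiff : x (Nat.find hxz) ≠ z (Nat.find hxz) := Nat.find_spec hxz
  have hagree : ∀ j < Nat.find hxz, x j = z j := fun j hj =>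
    not_not.mp (Nat.find_min hxz hj)
  have hsi : s.length ≤ Nat.find hxz := by
    by_contra hc
    push_neg at hc
    apply hdiff
    rw [mem_Cyl_iff_res] at hzU
    have := List.getElem_of_eq hzU (by simp only [res_length]; exact hc)
    simp only [res, List.getElem_ofFn] at this
    exact this.symm
  have hpre : s <+: res x (Nat.find hxz) := by
    have h1 : res x s.length = s := (mem_Cyl_iff_res).1 hxc
    rw [← h1]
    exact res_prefix x hsi
  exact ⟨res x (Nat.find hxz), hpre, splits_res hxD hzD hagree hdiff⟩

open Classical in
noncomputable def sigmaN (D : Set (ℕ → Bool)) (s : List Bool) : List Bool :=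
  if h : ∃ n, ∃ u : List Bool, u.length = n ∧ s <+: u ∧ Splits D u then
    Classical.choose (Nat.find_spec h)
  else s

lemma sigmaN_spec (hD : Preperfect D) {s : List Bool} (hs : InD D s) :
    s <+: sigmaN D s ∧ Splits D (sigmaN D s) ∧
      ∀ u, s <+: u → Splits D u → (sigmaN D s).length ≤ u.length := by
  classical
  obtain ⟨u0, hu1, hu2⟩ := exists_splits_ext hD hs
  have h : ∃ n, ∃ u : List Bool, u.length = n ∧ s <+: u ∧ Splits D u :=
    ⟨u0.length, u0, rfl, hu1, hu2⟩
  have hval : sigmaN D s = Classical.choose (Nat.find_spec h) := by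
    rw [sigmaN, dif_pos h]
  obtain ⟨hlen, hpre, hsp⟩ := Classical.choose_spec (Nat.find_spec h)
  refine ⟨hval ▸ hpre, hval ▸ hsp, ?_⟩
  intro u hu1' hu2'
  rw [hval, hlen]
  exact Nat.find_min' h ⟨u, rfl, hu1', hu2'⟩

noncomputable def theta (D : Set (ℕ → Bool)) : List Bool → List Bool
  | [] => sigmaN D []
  | b :: r => sigmaN D (theta D r ++ [b])

noncomputable def psi (D : Set (ℕ → Bool)) (s : List Bool) : List Bool := theta D s.reverse

lemma psi_nil : psi D [] = sigmaN D [] := rfl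

lemma psi_snoc (s : List Bool) (b : Bool) :
    psi D (s ++ [b]) = sigmaN D (psi D s ++ [b]) := by
  rw [psi, List.reverse_append]
  rfl

lemma psi_spec (hD : Preperfect D) (hne : InD D []) :
    ∀ s : List Bool, Splits D (psi D s) ∧ s.length ≤ (psi D s).length := by
  intro s
  induction s using List.reverseRecOn with
  | nil => exact ⟨(sigmaN_spec hD hne).2.1, Nat.zero_le _⟩
  | append_singleton s b ih =>
    have hin : InD D (psi D s ++ [b]) := by
      cases b
      · exact ih.1.1
      · exact ih.1.2
    have hspec := sigmaN_spec hD hin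
    rw [psi_snoc]
    refine ⟨hspec.2.1, ?_⟩
    have h1 := hspec.1.length_le
    simp only [List.length_append, List.length_singleton] at h1 ⊢
    have := ih.2
    omega

lemma psi_inD (hD : Preperfect D) (hne : InD D []) (s : List Bool) : InD D (psi D s) :=
  (psi_spec hD hne s).1.inD

lemma psi_step_prefix (hD : Preperfect D) (hne : InD D []) (s : List Bool) (b : Bool) :
    psi D s ++ [b] <+: psi D (s ++ [b]) := by
  have hin : InD D (psi D s ++ [b]) := by
    cases b
    · exact (psi_spec hD hne s).1.1
    · exact (psi_spec hD hne s).1.2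
  rw [psi_snoc]
  exact (sigmaN_spec hD hin).1

lemma psi_mono (hD : Preperfect D) (hne : InD D []) {s t : List Bool} (h : s <+: t) :
    psi D s <+: psi D t := by
  induction t using List.reverseRecOn with
  | nil =>
    have : s = [] := List.prefix_nil.mp h
    rw [this]
  | append_singleton t b ih =>
    rcases List.prefix_concat_iff.mp h with h1 | h1
    · rw [h1]
    · exact (ih h1).trans ((List.prefix_append _ _).trans (psi_step_prefix hD hne t b))

lemma psi_incomp_aux (hD : Preperfect D) (hne : InD D []) {w s' t' : List Bool} {b c : Bool}
    (hbc : b ≠ c) : ¬ psi D (w ++ b :: s') <+: psi D (w ++ c :: t') := by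
  intro hcon
  have hps : w ++ [b] <+: w ++ b :: s' := by
    rw [show w ++ b :: s' = (w ++ [b]) ++ s' by simp]
    exact List.prefix_append _ _
  have hpt : w ++ [c] <+: w ++ c :: t' := by
    rw [show w ++ c :: t' = (w ++ [c]) ++ t' by simp]
    exact List.prefix_append _ _
  have h1 : psi D w ++ [b] <+: psi D (w ++ b :: s') :=
    (psi_step_prefix hD hne w b).trans (psi_mono hD hne hps)
  have h2 : psi D w ++ [c] <+: psi D (w ++ c :: t') :=
    (psi_step_prefix hD hne w c).trans (psi_mono hD hne hpt)
  have h3 : psi D w ++ [b] <+: psi D (w ++ c :: t') := h1.trans hcon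
  have := prefix_eq_of_length h3 h2 (by simp)
  simp only [List.append_cancel_left_eq, List.cons.injEq] at this
  exact hbc this.1

lemma ne_decomp : ∀ s t : List Bool, s ≠ t → s <+: t ∨ t <+: s ∨
    ∃ w s' t' b c, b ≠ c ∧ s = w ++ b :: s' ∧ t = w ++ c :: t' := by
  intro s
  induction s with
  | nil => intro t _; exact Or.inl List.nil_prefix
  | cons a s' ih =>
    intro t hne
    cases t with
    | nil => exact Or.inr (Or.inl List.nil_prefix)
    | cons d t' =>
      by_cases had : a = d
      · subst had
        by_cases hst : s' = t'
        · exact absurd (by rw [hst]) hne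
        · rcases ih t' hst with h | h | ⟨w, s'', t'', b, c, hbc, hs, ht⟩
          · exact Or.inl (List.cons_prefix_cons.2 ⟨rfl, h⟩)
          · exact Or.inr (Or.inl (List.cons_prefix_cons.2 ⟨rfl, h⟩))
          · exact Or.inr (Or.inr ⟨a :: w, s'', t'', b, c, hbc,
              by rw [hs]; rfl, by rw [ht]; rfl⟩)
      · exact Or.inr (Or.inr ⟨[], s', t', a, d, had, rfl, rfl⟩)

lemma psi_incomp (hD : Preperfect D) (hne : InD D []) {s t : List Bool}
    (h1 : ¬ s <+: t) (h2 : ¬ t <+: s) :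
    ¬ psi D s <+: psi D t ∧ ¬ psi D t <+: psi D s := by
  rcases ne_decomp s t (fun he => h1 (he ▸ List.prefix_refl _)) with h | h |
    ⟨w, s', t', b, c, hbc, hs, ht⟩
  · exact absurd h h1
  · exact absurd h h2
  · subst hs; subst ht
    exact ⟨psi_incomp_aux hD hne hbc, psi_incomp_aux hD hne hbc.symm⟩

end Split

end Aux19

namespace Aux19

section Construct

variable (T : List Bool → Set ℕ) (D : Set (ℕ → Bool))

noncomputable def Vup (k : ℕ) : Set ℕ :=
  ⋃ (s : List Bool) (_ : s.length ≤ k), T (psi D s)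

noncomputable def leftover (u : List Bool) : Set ℕ :=
  T (psi D u) \ (T (psi D (u ++ [false])) ∪ T (psi D (u ++ [true])))

noncomputable def Lset (s : List Bool) : Set ℕ :=
  ⋃ (j : ℕ) (_ : j < s.length)
    (_ : s.drop j = List.replicate (s.length - j) false), leftover T D (s.take j)

noncomputable def Tfull (s : List Bool) : Set ℕ :=
  T (psi D s) ∪ Lset T D s ∪ (Stree s \ Vup T D s.length)

variable {T D}

lemma Vup_mono {k k' : ℕ} (h : k ≤ k') : Vup T D k ⊆ Vup T D k' := by
  intro n hn
  simp only [Vup, Set.mem_iUnion] at hn ⊢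
  obtain ⟨s, hs, hns⟩ := hn
  exact ⟨s, le_trans hs h, hns⟩

lemma subset_Vup {s : List Bool} {k : ℕ} (h : s.length ≤ k) : T (psi D s) ⊆ Vup T D k := by
  intro n hn
  simp only [Vup, Set.mem_iUnion]
  exact ⟨s, h, hn⟩

lemma leftover_subset (u : List Bool) : leftover T D u ⊆ T (psi D u) := Set.diff_subset

lemma Lset_subset_Vup (s : List Bool) : Lset T D s ⊆ Vup T D s.length := by
  intro n hn
  simp only [Lset, Set.mem_iUnion] at hn
  obtain ⟨j, hj, _, hmem⟩ := hn
  exact subset_Vup (by rw [List.length_take]; omega) (leftover_subset _ hmem)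

lemma leftover_subset_Lset {u : List Bool} {m : ℕ} (hm : 1 ≤ m) :
    leftover T D u ⊆ Lset T D (u ++ List.replicate m false) := by
  intro n hn
  simp only [Lset, Set.mem_iUnion]
  refine ⟨u.length, ?_, ?_, ?_⟩
  · simp only [List.length_append, List.length_replicate]; omega
  · rw [List.drop_left]
    congr 1
    simp only [List.length_append, List.length_replicate]
    omega
  · rw [List.take_left]
    exact hn

lemma take_snoc_prefix {u v : List Bool} (hpre : u <+: v) (hlen : u.length < v.length) :
    u ++ [v.get ⟨u.length, hlen⟩] <+: v := by
  have h1 : v.take u.length = u := (List.prefix_iff_eq_take.1 hpre).symm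
  have h2 : v.take (u.length + 1) = u ++ [v.get ⟨u.length, hlen⟩] := by
    rw [List.take_succ, h1, List.getElem?_eq_getElem hlen]
    simp [List.get_eq_getElem]
  rw [← h2]
  exact List.take_prefix _ _

lemma leftover_inter_psi (hT : IsTreeOfSubsets T) (hD : Preperfect D) (hne : InD D [])
    {u v : List Bool} (hlen : u.length < v.length) :
    (leftover T D u ∩ T (psi D v)).Finite := by
  by_cases hpre : u <+: v
  · have hc : u ++ [v.get ⟨u.length, hlen⟩] <+: v := take_snoc_prefix hpre hlen
    have hfin := hT.1 _ _ (psi_mono hD hne hc)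
    apply hfin.subset
    rintro n ⟨hn1, hn2⟩
    refine ⟨hn2, ?_⟩
    intro hmem
    apply hn1.2
    rcases Bool.eq_false_or_eq_true (v.get ⟨u.length, hlen⟩) with hb | hb
    · rw [hb] at hmem; exact Or.inr hmem
    · rw [hb] at hmem; exact Or.inl hmem
  · have hpre2 : ¬ v <+: u := fun h => absurd h.length_le (by omega)
    have hinc := psi_incomp hD hne hpre hpre2
    apply (incomp_finite hT hinc.1 hinc.2).subset
    rintro n ⟨hn1, hn2⟩
    exact ⟨leftover_subset u hn1, hn2⟩

lemma prefix_of_eq_length {u v : List Bool} (h : u <+: v) (hlen : u.length = v.length) :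
    u = v := prefix_eq_of_length h (List.prefix_refl v) hlen

lemma psi_ad (hT : IsTreeOfSubsets T) (hD : Preperfect D) (hne : InD D [])
    {u v : List Bool} (hlen : u.length = v.length) (hne' : u ≠ v) :
    (T (psi D u) ∩ T (psi D v)).Finite := by
  have h1 : ¬ u <+: v := fun h => hne' (prefix_of_eq_length h hlen)
  have h2 : ¬ v <+: u := fun h => hne' (prefix_of_eq_length h hlen.symm).symm
  have hinc := psi_incomp hD hne h1 h2
  exact incomp_finite hT hinc.1 hinc.2

lemma psi_inter_Lset (hT : IsTreeOfSubsets T) (hD : Preperfect D) (hne : InD D [])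
    {a b : List Bool} (hlen : b.length ≤ a.length) :
    (T (psi D a) ∩ Lset T D b).Finite := by
  have hsub : T (psi D a) ∩ Lset T D b ⊆
      ⋃ j ∈ Set.Iio b.length, (leftover T D (b.take j) ∩ T (psi D a)) := by
    rintro n ⟨h1, h2⟩
    simp only [Lset, Set.mem_iUnion] at h2
    obtain ⟨j, hj, _, hmem⟩ := h2
    exact Set.mem_biUnion (Set.mem_Iio.2 hj) ⟨hmem, h1⟩
  refine Set.Finite.subset (Set.Finite.biUnion (Set.finite_Iio _) fun j hj => ?_) hsub
  have hj' : j < b.length := Set.mem_Iio.1 hj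
  exact leftover_inter_psi hT hD hne (by rw [List.length_take]; omega)

/-- The prefix axiom for `Tfull`. -/
lemma Tfull_prefix (hT : IsTreeOfSubsets T) (hD : Preperfect D) (hne : InD D []) :
    ∀ s t, s <+: t → (Tfull T D t \ Tfull T D s).Finite := by
  intro s t hst
  have hA : (T (psi D t) \ T (psi D s)).Finite := hT.1 _ _ (psi_mono hD hne hst)
  have hL : (Lset T D t \ Tfull T D s).Finite := by
    have hsub : Lset T D t \ Tfull T D s ⊆
        ⋃ j ∈ Set.Iio t.length,
          (if t.drop j = List.replicate (t.length - j) false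
            then leftover T D (t.take j) \ Tfull T D s else ∅) := by
      rintro n ⟨hn1, hn2⟩
      simp only [Lset, Set.mem_iUnion] at hn1
      obtain ⟨j, hj, hcond, hmem⟩ := hn1
      refine Set.mem_biUnion (Set.mem_Iio.2 hj) ?_
      rw [if_pos hcond]
      exact ⟨hmem, hn2⟩
    refine Set.Finite.subset (Set.Finite.biUnion (Set.finite_Iio _) fun j hj => ?_) hsub
    have hj' : j < t.length := Set.mem_Iio.1 hj
    by_cases hcond : t.drop j = List.replicate (t.length - j) false
    · rw [if_pos hcond]
      rcases Nat.lt_or_ge j s.length with hjs | hjs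
      · have htake : s.take j = t.take j := by
          conv_lhs => rw [List.prefix_iff_eq_take.1 hst]
          rw [List.take_take, min_eq_left (le_of_lt hjs)]
        have hdrop : s.drop j = List.replicate (s.length - j) false := by
          conv_lhs => rw [List.prefix_iff_eq_take.1 hst]
          rw [List.drop_take, hcond, List.take_replicate]
          congr 1
          have := hst.length_le
          omega
        have hsubL : leftover T D (t.take j) ⊆ Lset T D s := by
          intro n hn
          simp only [Lset, Set.mem_iUnion]
          exact ⟨j, hjs, hdrop, by rw [htake]; exact hn⟩
        apply Set.Finite.subset Set.finite_empty
        rintro n ⟨hn1, hn2⟩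
        exact (hn2 (Or.inl (Or.inr (hsubL hn1)))).elim
      · have hpre : s <+: t.take j := List.prefix_take_iff.2 ⟨hst, hjs⟩
        have hfin := hT.1 _ _ (psi_mono hD hne hpre)
        apply hfin.subset
        rintro n ⟨hn1, hn2⟩
        exact ⟨leftover_subset _ hn1, fun hmem => hn2 (Or.inl (Or.inl hmem))⟩
    · rw [if_neg hcond]; exact Set.finite_empty
  apply (hA.union hL).subset
  rintro n ⟨hn1, hn2⟩
  rcases hn1 with (h | h) | h
  · exact Or.inl ⟨h, fun hmem => hn2 (Or.inl (Or.inl hmem))⟩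
  · exact Or.inr ⟨h, hn2⟩
  · exfalso
    apply hn2
    refine Or.inr ⟨Stree_anti hst h.1, fun hv => h.2 (Vup_mono hst.length_le hv)⟩

/-- The covering axiom for `Tfull`: exact covering at every level. -/
lemma Tfull_cover (k : ℕ) (n : ℕ) : ∃ s, s.length = k ∧ n ∈ Tfull T D s := by
  have step : ∀ m u, u.length + m = k → n ∈ T (psi D u) →
      ∃ s, s.length = k ∧ n ∈ Tfull T D s := by
    intro m
    induction m with
    | zero => intro u hu hn; exact ⟨u, by omega, Or.inl (Or.inl hn)⟩
    | succ m ih =>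
      intro u hu hn
      by_cases hf : n ∈ T (psi D (u ++ [false]))
      · exact ih (u ++ [false]) (by simp; omega) hf
      · by_cases ht2 : n ∈ T (psi D (u ++ [true]))
        · exact ih (u ++ [true]) (by simp; omega) ht2
        · refine ⟨u ++ List.replicate (m + 1) false, by simp; omega, ?_⟩
          refine Or.inl (Or.inr (leftover_subset_Lset (by omega) ?_))
          refine ⟨hn, ?_⟩
          rintro (h | h)
          · exact hf h
          · exact ht2 h
  by_cases hV : n ∈ Vup T D k
  · simp only [Vup, Set.mem_iUnion] at hV
    obtain ⟨u, hu, hnu⟩ := hV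
    exact step (k - u.length) u (by omega) hnu
  · refine ⟨toBits k n, toBits_length k n, Or.inr ⟨mem_Stree_toBits k n, ?_⟩⟩
    rw [toBits_length]
    exact hV

/-- The almost-disjointness axiom for `Tfull`. -/
lemma Tfull_ad (hT : IsTreeOfSubsets T) (hD : Preperfect D) (hne : InD D []) :
    ∀ s t, s.length = t.length → s ≠ t → (Tfull T D s ∩ Tfull T D t).Finite := by
  intro s t hlen hne'
  have hAA : (T (psi D s) ∩ T (psi D t)).Finite := psi_ad hT hD hne hlen hne'
  have hAL : (T (psi D s) ∩ Lset T D t).Finite :=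
    psi_inter_Lset hT hD hne (le_of_eq hlen.symm)
  have hLA : (Lset T D s ∩ T (psi D t)).Finite := by
    rw [Set.inter_comm]
    exact psi_inter_Lset hT hD hne (le_of_eq hlen)
  have hLL : (Lset T D s ∩ Lset T D t).Finite := by
    have hsub : Lset T D s ∩ Lset T D t ⊆
        ⋃ j ∈ Set.Iio s.length, ⋃ j' ∈ Set.Iio t.length,
          (if (s.drop j = List.replicate (s.length - j) false ∧
               t.drop j' = List.replicate (t.length - j') false)
            then leftover T D (s.take j) ∩ leftover T D (t.take j') else ∅) := by
      rintro n ⟨h1, h2⟩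
      simp only [Lset, Set.mem_iUnion] at h1 h2
      obtain ⟨j, hj, hcond, hmem⟩ := h1
      obtain ⟨j', hj', hcond', hmem'⟩ := h2
      refine Set.mem_biUnion (Set.mem_Iio.2 hj) ?_
      refine Set.mem_biUnion (Set.mem_Iio.2 hj') ?_
      rw [if_pos ⟨hcond, hcond'⟩]
      exact ⟨hmem, hmem'⟩
    refine Set.Finite.subset (Set.Finite.biUnion (Set.finite_Iio _) fun j hj =>
      Set.Finite.biUnion (Set.finite_Iio _) fun j' hj' => ?_) hsub
    have hjs : j < s.length := Set.mem_Iio.1 hj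
    have hjt : j' < t.length := Set.mem_Iio.1 hj'
    by_cases hcond : (s.drop j = List.replicate (s.length - j) false ∧
        t.drop j' = List.replicate (t.length - j') false)
    · rw [if_pos hcond]
      rcases Nat.lt_trichotomy j j' with hlt | heq | hgt
      · apply Set.Finite.subset (leftover_inter_psi hT hD hne
          (u := s.take j) (v := t.take j')
          (by rw [List.length_take, List.length_take]; omega))
        rintro n ⟨hn1, hn2⟩
        exact ⟨hn1, leftover_subset _ hn2⟩
      · subst heq
        by_cases huu : s.take j = t.take j
        · exfalso
          apply hne'
          calc s = s.take j ++ s.drop j := (List.take_append_drop _ _).symm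
            _ = t.take j ++ t.drop j := by
                rw [huu, hcond.1, hcond.2, hlen]
            _ = t := List.take_append_drop _ _
        · apply Set.Finite.subset (psi_ad hT hD hne (u := s.take j) (v := t.take j)
            (by rw [List.length_take, List.length_take]; omega) huu)
          rintro n ⟨hn1, hn2⟩
          exact ⟨leftover_subset _ hn1, leftover_subset _ hn2⟩
      · apply Set.Finite.subset (leftover_inter_psi hT hD hne
          (u := t.take j') (v := s.take j)
          (by rw [List.length_take, List.length_take]; omega))
        rintro n ⟨hn1, hn2⟩
        exact ⟨hn2, leftover_subset _ hn1⟩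
    · rw [if_neg hcond]; exact Set.finite_empty
  apply Set.Finite.subset (hAA.union (hAL.union (hLA.union hLL)))
  rintro n ⟨hs, ht⟩
  rcases hs with (hs1 | hs2) | hs3
  · rcases ht with (ht1 | ht2) | ht3
    · exact Or.inl ⟨hs1, ht1⟩
    · exact Or.inr (Or.inl ⟨hs1, ht2⟩)
    · exact (ht3.2 (subset_Vup (le_of_eq hlen) hs1)).elim
  · rcases ht with (ht1 | ht2) | ht3
    · exact Or.inr (Or.inr (Or.inl ⟨hs2, ht1⟩))
    · exact Or.inr (Or.inr (Or.inr ⟨hs2, ht2⟩))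
    · exfalso
      apply ht3.2
      have := Lset_subset_Vup s hs2
      rw [hlen] at this
      exact this
  · rcases ht with (ht1 | ht2) | ht3
    · exact (hs3.2 (subset_Vup (le_of_eq hlen.symm) ht1)).elim
    · exfalso
      apply hs3.2
      have := Lset_subset_Vup t ht2
      rw [← hlen] at this
      exact this
    · exfalso
      have hd := Stree_disjoint hlen hne'
      have : n ∈ Stree s ∩ Stree t := ⟨hs3.1, ht3.1⟩
      rw [hd] at this
      exact this

lemma Tfull_tree (hT : IsTreeOfSubsets T) (hD : Preperfect D) (hne : InD D []) :
    IsTreeOfSubsets (Tfull T D) := by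
  refine ⟨Tfull_prefix hT hD hne, ?_, Tfull_ad hT hD hne⟩
  intro k
  have : (⋃ s ∈ {l : List Bool | l.length = k}, Tfull T D s) = Set.univ := by
    ext n
    simp only [Set.mem_univ, iff_true, Set.mem_setOf_eq, Set.mem_iUnion]
    obtain ⟨s, h1, h2⟩ := Tfull_cover (T := T) (D := D) k n
    exact ⟨s, h1, h2⟩
  rw [this, Set.compl_univ]
  exact Set.finite_empty

lemma Tfull_full (hD : Preperfect D) (hne : InD D []) (hDB : D ⊆ Branches T) :
    IsFullTree (Tfull T D) := by
  intro s
  have hinf : (T (psi D s)).Infinite := by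
    obtain ⟨x, hxD, hxc⟩ := psi_inD hD hne s
    have := hDB hxD ((psi D s).length)
    rwa [(mem_Cyl_iff_res).1 hxc] at this
  exact hinf.mono fun n hn => Or.inl (Or.inl hn)

end Construct

end Aux19

namespace Aux19

section Passes

variable {D : Set (ℕ → Bool)}

lemma passes (hD : Preperfect D) {x : ℕ → Bool} {s : List Bool} (hx : x ∈ D)
    (hxs : x ∈ Cyl s) : x ∈ Cyl (sigmaN D s) := by
  classical
  have hs : InD D s := ⟨x, hx, hxs⟩
  obtain ⟨hpre, hsplit, hmin⟩ := sigmaN_spec hD hs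
  by_contra hcon
  have hex : ∃ i, ∃ (h : i < (sigmaN D s).length), x i ≠ (sigmaN D s).get ⟨i, h⟩ := by
    by_contra hc
    push_neg at hc
    exact hcon fun i => hc i.val i.isLt
  obtain ⟨hilt, hidiff⟩ := Nat.find_spec hex
  set i := Nat.find hex with hi
  have hmini : ∀ j, j < i → ∀ (hj : j < (sigmaN D s).length),
      x j = (sigmaN D s).get ⟨j, hj⟩ := by
    intro j hj hjl
    by_contra hc
    exact Nat.find_min hex hj ⟨hjl, hc⟩
  have htake : (sigmaN D s).take i = res x i := by
    apply List.ext_get (by simp [List.length_take]; omega)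
    intro j h1 h2
    have hjl : j < (sigmaN D s).length := by simp [List.length_take] at h1; omega
    have hji : j < i := by simp [List.length_take] at h1; omega
    simp only [List.get_eq_getElem, List.getElem_take, res, List.getElem_ofFn]
    exact (hmini j hji hjl).symm
  have hsi : s.length ≤ i := by
    by_contra hc
    push_neg at hc
    apply hidiff
    have h1 : x i = s.get ⟨i, hc⟩ := hxs ⟨i, hc⟩
    have h2 : (sigmaN D s).get ⟨i, hilt⟩ = s.get ⟨i, hc⟩ := by
      simp only [List.get_eq_getElem]
      exact (hpre.getElem hc).symm
    rw [h1, h2]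
  have husplit : Splits D ((sigmaN D s).take i) := by
    rw [htake]
    apply splits_of_both (c := x i) (c' := (sigmaN D s).get ⟨i, hilt⟩) hidiff
    · exact ⟨x, hx, by rw [res_snoc]; exact self_mem_Cyl x (i + 1)⟩
    · obtain ⟨z, hzD, hzc⟩ := hsplit.inD
      refine ⟨z, hzD, ?_⟩
      apply Cyl_anti ?_ hzc
      rw [← htake]
      have hstep : (sigmaN D s).take (i + 1) =
          (sigmaN D s).take i ++ [(sigmaN D s).get ⟨i, hilt⟩] := by
        rw [List.take_succ, List.getElem?_eq_getElem hilt]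
        simp [List.get_eq_getElem]
      rw [← hstep]
      exact List.take_prefix _ _
  have hpre_u : s <+: (sigmaN D s).take i := List.prefix_take_iff.2 ⟨hpre, hsi⟩
  have hbad := hmin _ hpre_u husplit
  rw [List.length_take] at hbad
  omega

variable (D) in
noncomputable def hl (x : ℕ → Bool) : ℕ → List Bool
  | 0 => []
  | n + 1 => hl x n ++ [x (psi D (hl x n)).length]

variable (D) in
noncomputable def hfun (x : ℕ → Bool) (n : ℕ) : Bool := x (psi D (hl D x n)).length

lemma hl_ofFn (x : ℕ → Bool) : ∀ n, List.ofFn (fun i : Fin n => hfun D x i.val) = hl D x n := by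
  intro n
  induction n with
  | zero => rfl
  | succ n ih =>
    rw [List.ofFn_succ', List.concat_eq_append]
    have h1 : (List.ofFn fun i : Fin n => hfun D x (Fin.castSucc i).val) =
        List.ofFn fun i : Fin n => hfun D x i.val := rfl
    show _ ++ _ = hl D x n ++ _
    rw [h1, ih]
    rfl

lemma hl_cyl (hD : Preperfect D) {x : ℕ → Bool} (hx : x ∈ D) :
    ∀ n, x ∈ Cyl (psi D (hl D x n)) := by
  intro n
  induction n with
  | zero =>
    rw [show hl D x 0 = [] from rfl, psi_nil]
    exact passes hD hx (by rw [Cyl_nil]; trivial)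
  | succ n ih =>
    have hsnoc : hl D x (n + 1) = hl D x n ++ [x (psi D (hl D x n)).length] := rfl
    rw [hsnoc, psi_snoc]
    exact passes hD hx (mem_Cyl_snoc ih)

lemma hfun_mem_treeLimit {T : List Bool → Set ℕ} {X : Set ℕ}
    (hD : Preperfect D) {x : ℕ → Bool} (hx : x ∈ D) (hxT : x ∈ TreeLimit T X) :
    hfun D x ∈ TreeLimit (Tfull T D) X := by
  intro k
  have h1 : (List.ofFn fun i : Fin k => hfun D x i.val) = hl D x k := hl_ofFn x k
  rw [h1]
  have h2 : psi D (hl D x k) = res x (psi D (hl D x k)).length :=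
    ((mem_Cyl_iff_res).1 (hl_cyl hD hx k)).symm
  have h3 := hxT (psi D (hl D x k)).length
  rw [show (List.ofFn fun i : Fin (psi D (hl D x k)).length => x i.val) =
    res x (psi D (hl D x k)).length from rfl, ← h2] at h3
  exact h3.mono fun n hn => ⟨Or.inl (Or.inl hn.1), hn.2⟩

lemma mem_cyl_psi_of_hfun (hD : Preperfect D) {x : ℕ → Bool} {v : List Bool}
    (hx : x ∈ D) (h : hfun D x ∈ Cyl v) : x ∈ Cyl (psi D v) := by
  have h1 : hl D x v.length = v := by
    rw [← hl_ofFn]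
    rw [mem_Cyl_iff_res] at h
    exact h
  have h2 := hl_cyl hD hx v.length
  rwa [h1] at h2

end Passes

end Aux19


/-- An ultrafilter `𝒰` on `ω` `𝒩`-diagonalizes full trees if and only if it
`𝒩`-diagonalizes all trees of subsets of `ω`; here `lam` is the standard coin-flipping measure
on `2^ω`, whose null sets form the σ-ideal `𝒩`. -/
theorem diagonalizes_full_trees_iff_diagonalizes_trees
    (lam : Measure (ℕ → Bool))
    (hlam : ∀ v : List Bool, lam (Cyl v) = (1 / 2 : ℝ≥0∞) ^ v.length)
    (𝒰 : Ultrafilter ℕ) :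
    (∀ T : List Bool → Set ℕ, IsTreeOfSubsets T → IsFullTree T →
        ∃ X ∈ 𝒰, lam (TreeLimit T X) = 0) ↔
      (∀ T : List Bool → Set ℕ, IsTreeOfSubsets T → ∃ X ∈ 𝒰, lam (TreeLimit T X) = 0) := by
  constructor
  · intro hfull T hT
    classical
    haveI hfin : IsFiniteMeasure lam := Aux19.lam_finite hlam
    obtain ⟨Vc, D, hVc, hPerf, hCD⟩ :=
      exists_countable_union_perfect_of_isClosed (Aux19.isClosed_branches T)
    have hDB : D ⊆ Aux19.Branches T := by rw [hCD]; exact Set.subset_union_right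
    have hVc0 : lam Vc = 0 := Aux19.lam_countable hlam hVc
    by_cases hDne : D.Nonempty
    · have hne : Aux19.InD D [] := by
        obtain ⟨x, hx⟩ := hDne
        exact ⟨x, hx, by rw [Aux19.Cyl_nil]; trivial⟩
      have hD : Preperfect D := hPerf.acc
      obtain ⟨X, hX, hX0⟩ := hfull (Aux19.Tfull T D) (Aux19.Tfull_tree hT hD hne)
        (Aux19.Tfull_full hD hne hDB)
      refine ⟨X, hX, ?_⟩
      have hsub : TreeLimit T X ⊆ Vc ∪ (D ∩ TreeLimit T X) := by
        intro x hx
        have hxB := Aux19.treeLimit_subset_branches T X hx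
        rw [hCD] at hxB
        rcases hxB with h | h
        · exact Or.inl h
        · exact Or.inr ⟨h, hx⟩
      have hDpart : lam (D ∩ TreeLimit T X) = 0 := by
        rw [← le_zero_iff]
        apply ENNReal.le_of_forall_pos_le_add
        intro ε hε _
        rw [zero_add]
        obtain ⟨F, hFc, hFcov, hFsum⟩ := Aux19.exists_cyl_cover hlam hX0
          (show (0 : ℝ≥0∞) < ε from ENNReal.coe_pos.2 hε)
        have hcov2 : D ∩ TreeLimit T X ⊆ ⋃ v ∈ F, Cyl (Aux19.psi D v) := by
          rintro x ⟨hxD, hxT⟩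
          have hmem := hFcov (Aux19.hfun_mem_treeLimit hD hxD hxT)
          simp only [Set.mem_iUnion] at hmem ⊢
          obtain ⟨v, hvF, hxv⟩ := hmem
          exact ⟨v, hvF, Aux19.mem_cyl_psi_of_hfun hD hxD hxv⟩
        calc lam (D ∩ TreeLimit T X) ≤ lam (⋃ v ∈ F, Cyl (Aux19.psi D v)) :=
              measure_mono hcov2
          _ ≤ ∑' v : F, lam (Cyl (Aux19.psi D (v : List Bool))) :=
              measure_biUnion_le lam hFc _
          _ ≤ ∑' v : F, lam (Cyl (v : List Bool)) := by
              apply ENNReal.tsum_le_tsum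
              intro v
              rw [hlam, hlam]
              exact pow_le_pow_of_le_one (by simp) (by norm_num)
                (Aux19.psi_spec hD hne (v : List Bool)).2
          _ ≤ ε := hFsum
      rw [← le_zero_iff]
      calc lam (TreeLimit T X) ≤ lam (Vc ∪ (D ∩ TreeLimit T X)) := measure_mono hsub
        _ ≤ lam Vc + lam (D ∩ TreeLimit T X) := measure_union_le _ _
        _ = 0 := by rw [hVc0, hDpart, add_zero]
    · refine ⟨Set.univ, Filter.univ_mem, ?_⟩
      have hDe : D = ∅ := Set.not_nonempty_iff_eq_empty.mp hDne
      apply measure_mono_null ?_ hVc0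
      intro x hx
      have hxB := Aux19.treeLimit_subset_branches T Set.univ hx
      rw [hCD, hDe, Set.union_empty] at hxB
      exact hxB
  · intro h T hT _
    exact h T hT
end
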